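/- arXiv:1810.10231 — 4 statements merged into one kernel-verified Lean document; each statement's English description precedes it below -/
import Mathlib

section
/- Let P be a set of n points in general position in the plane. Then there exist two points p₁ and p₂ in ℝ² such that (1) every closed halfplane containing at least one of p₁, p₂ contains at least n/5 of the points of P, and (2) every closed halfplane containing both p₁ and p₂ contains at least 2n/5 of the points of P. -/
open Finset

local notation "E2" => EuclideanSpace ℝ (Fin 2)

section counting
variable {α : Type*} (P : Finset α)

lemma pair_count (q1 q2 : α → Prop) [DecidablePred q1] [DecidablePred q2]
    (h : P.card < (P.filter q1).card + (P.filter q2).card) :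
    ∃ p ∈ P, q1 p ∧ q2 p := by
  classical
  have hu : ((P.filter q1) ∪ (P.filter q2)).card ≤ P.card :=
    Finset.card_le_card (by intro x hx; rcases Finset.mem_union.1 hx with h | h <;>
      exact Finset.mem_of_mem_filter x h)
  have hie := Finset.card_union_add_card_inter (P.filter q1) (P.filter q2)
  have hpos : 0 < ((P.filter q1) ∩ (P.filter q2)).card := by omega
  obtain ⟨x, hx⟩ := Finset.card_pos.1 hpos
  rw [Finset.mem_inter, Finset.mem_filter, Finset.mem_filter] at hx
  exact ⟨x, hx.1.1, hx.1.2, hx.2.2⟩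

lemma triple_count (q1 q2 q3 : α → Prop) [DecidablePred q1] [DecidablePred q2] [DecidablePred q3]
    (h : 2 * P.card < (P.filter q1).card + (P.filter q2).card + (P.filter q3).card) :
    ∃ p ∈ P, q1 p ∧ q2 p ∧ q3 p := by
  classical
  have h12 : (P.filter q1).card + (P.filter q2).card ≤
      P.card + (P.filter (fun x => q1 x ∧ q2 x)).card := by
    have hu : ((P.filter q1) ∪ (P.filter q2)).card ≤ P.card :=
      Finset.card_le_card (by intro x hx; rcases Finset.mem_union.1 hx with h | h <;>
        exact Finset.mem_of_mem_filter x h)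
    have hie := Finset.card_union_add_card_inter (P.filter q1) (P.filter q2)
    rw [← Finset.filter_and] at hie
    omega
  obtain ⟨p, hp, ⟨h1, h2⟩, h3⟩ := pair_count P (fun x => q1 x ∧ q2 x) q3 (by omega)
  exact ⟨p, hp, h1, h2, h3⟩
end counting

/-- being between two reals, unordered -/
def RBtw (a b m : ℝ) : Prop := (a ≤ m ∧ m ≤ b) ∨ (b ≤ m ∧ m ≤ a)

lemma exists_median (a b c : ℝ) : ∃ m : ℝ, RBtw a b m ∧ RBtw a c m ∧ RBtw b c m := by
  rcases le_total a b with hab | hab <;> rcases le_total b c with hbc | hbc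
  · exact ⟨b, Or.inl ⟨hab, le_rfl⟩, Or.inl ⟨hab, hbc⟩, Or.inl ⟨le_rfl, hbc⟩⟩
  · rcases le_total a c with hac | hac
    · exact ⟨c, Or.inl ⟨hac, hbc⟩, Or.inl ⟨hac, le_rfl⟩, Or.inr ⟨le_rfl, hbc⟩⟩
    · exact ⟨a, Or.inl ⟨le_rfl, hab⟩, Or.inr ⟨hac, le_rfl⟩, Or.inr ⟨hac, hab⟩⟩
  · rcases le_total a c with hac | hac
    · exact ⟨a, Or.inr ⟨hab, le_rfl⟩, Or.inl ⟨le_rfl, hac⟩, Or.inl ⟨hab, hac⟩⟩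
    · exact ⟨c, Or.inr ⟨hbc, hac⟩, Or.inr ⟨le_rfl, hac⟩, Or.inl ⟨hbc, le_rfl⟩⟩
  · exact ⟨b, Or.inr ⟨le_rfl, hab⟩, Or.inr ⟨hbc, hab⟩, Or.inr ⟨hbc, le_rfl⟩⟩

lemma RBtw.abs_le {a b m R : ℝ} (h : RBtw a b m) (ha : |a| ≤ R) (hb : |b| ≤ R) : |m| ≤ R := by
  obtain ⟨ha1, ha2⟩ := _root_.abs_le.mp ha
  obtain ⟨hb1, hb2⟩ := _root_.abs_le.mp hb
  rw [_root_.abs_le]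
  rcases h with ⟨h1, h2⟩ | ⟨h1, h2⟩ <;> constructor <;> linarith

lemma RBtw.mul_le {a b m : ℝ} (h : RBtw a b m) (t : ℝ) : t * m ≤ t * a ∨ t * m ≤ t * b := by
  rcases le_total 0 t with ht | ht <;> rcases h with ⟨h1, h2⟩ | ⟨h1, h2⟩
  · right; nlinarith
  · left; nlinarith
  · left; nlinarith
  · right; nlinarith

lemma inner_two (v x : E2) : (inner ℝ v x : ℝ) = v 0 * x 0 + v 1 * x 1 := by
  simp [PiLp.inner_apply, RCLike.inner_apply, Fin.sum_univ_two, mul_comm]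

lemma side (v : E2) (c R ε m : ℝ) (hR : 0 ≤ R) (hε : ε * ε = 1) (ha : 0 ≤ ε * v 0)
    (x y : E2) (hx0 : |x 0| ≤ R) (hy0 : |y 0| ≤ R)
    (hx : (inner ℝ v x : ℝ) ≤ c) (hy : (inner ℝ v y : ℝ) ≤ c) (hm : RBtw (x 1) (y 1) m) :
    v 0 * (ε * (-3 * R)) + v 1 * m ≤ c := by
  rw [inner_two] at hx hy
  rcases mul_self_eq_one_iff.1 hε with hev | hev <;> subst hev <;>
    rcases hm.mul_le (v 1) with h | h
  · have h2 : 0 ≤ v 0 * (x 0 + 3 * R) :=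
      mul_nonneg (by linarith) (by linarith [neg_abs_le (x 0)])
    nlinarith
  · have h2 : 0 ≤ v 0 * (y 0 + 3 * R) :=
      mul_nonneg (by linarith) (by linarith [neg_abs_le (y 0)])
    nlinarith
  · have h2 : 0 ≤ v 0 * (x 0 - 3 * R) := by nlinarith [le_abs_self (x 0)]
    nlinarith
  · have h2 : 0 ≤ v 0 * (y 0 - 3 * R) := by nlinarith [le_abs_self (y 0)]
    nlinarith

lemma triple_halfplane (R ε : ℝ) (hR : 0 ≤ R) (hε : ε * ε = 1)
    (v1 v2 v3 : E2) (c1 c2 c3 : ℝ)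
    (ha1 : 0 ≤ ε * v1 0) (ha2 : 0 ≤ ε * v2 0) (ha3 : 0 ≤ ε * v3 0)
    (x12 x13 x23 : E2)
    (b12 : |x12 0| ≤ R) (b12' : |x12 1| ≤ R) (b13 : |x13 0| ≤ R) (b13' : |x13 1| ≤ R)
    (b23 : |x23 0| ≤ R) (b23' : |x23 1| ≤ R)
    (m12a : (inner ℝ v1 x12 : ℝ) ≤ c1) (m12b : (inner ℝ v2 x12 : ℝ) ≤ c2)
    (m13a : (inner ℝ v1 x13 : ℝ) ≤ c1) (m13c : (inner ℝ v3 x13 : ℝ) ≤ c3)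
    (m23b : (inner ℝ v2 x23 : ℝ) ≤ c2) (m23c : (inner ℝ v3 x23 : ℝ) ≤ c3) :
    ∃ z : E2, |z 0| ≤ 3 * R ∧ |z 1| ≤ R ∧
      (inner ℝ v1 z : ℝ) ≤ c1 ∧ (inner ℝ v2 z : ℝ) ≤ c2 ∧ (inner ℝ v3 z : ℝ) ≤ c3 := by
  obtain ⟨m, h12, h13, h23⟩ := exists_median (x12 1) (x13 1) (x23 1)
  refine ⟨EuclideanSpace.single 0 (ε * (-3 * R)) + EuclideanSpace.single 1 m, ?_⟩
  set z : E2 := EuclideanSpace.single 0 (ε * (-3 * R)) + EuclideanSpace.single 1 m with hzdef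
  have hz0 : z 0 = ε * (-3 * R) := by
    simp [hzdef, EuclideanSpace.single_apply]
  have hz1 : z 1 = m := by
    simp [hzdef, EuclideanSpace.single_apply]
  have habs0 : |z 0| ≤ 3 * R := by
    rw [hz0]
    rcases mul_self_eq_one_iff.1 hε with hev | hev <;> subst hev <;>
      simp [abs_mul, abs_of_nonneg hR]
  refine ⟨habs0, by rw [hz1]; exact h12.abs_le b12' b13', ?_, ?_, ?_⟩ <;>
    rw [inner_two, hz0, hz1]
  · exact side v1 c1 R ε m hR hε ha1 x12 x13 b12 b13 m12a m13a h12
  · exact side v2 c2 R ε m hR hε ha2 x12 x23 b12 b23 m12b m23b h13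
  · exact side v3 c3 R ε m hR hε ha3 x13 x23 b13 b23 m13c m23c h23

lemma mem_ball_of_coords (R : ℝ) (hR : 0 ≤ R) (z : E2) (h0 : |z 0| ≤ 3*R) (h1 : |z 1| ≤ R) :
    z ∈ Metric.closedBall (0:E2) (4*R) := by
  rw [Metric.mem_closedBall, dist_zero_right]
  have hn : ‖z‖ = Real.sqrt (‖z 0‖^2 + ‖z 1‖^2) := by
    rw [EuclideanSpace.norm_eq, Fin.sum_univ_two]
  rw [hn]
  have h4 : Real.sqrt ((4*R)^2) = 4*R := Real.sqrt_sq (by linarith)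
  rw [← h4]
  apply Real.sqrt_le_sqrt
  rw [Real.norm_eq_abs, Real.norm_eq_abs]
  nlinarith [abs_nonneg (z 0), abs_nonneg (z 1)]

lemma exists_deep_point (n : ℕ) (hn : 0 < n) (P : Finset E2) (hcard : P.card = n)
    (ε : ℝ) (hε : ε * ε = 1) :
    ∃ p : E2, ∀ v : E2, ∀ c : ℝ,
      (((n:ℝ) - (n:ℝ)/5 < ((P.filter fun x => (inner ℝ v x : ℝ) ≤ c).card : ℝ)) ∨
       (0 ≤ ε * v 0 ∧ (n:ℝ) - 2*(n:ℝ)/5 < ((P.filter fun x => (inner ℝ v x : ℝ) ≤ c).card : ℝ))) →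
      (inner ℝ v p : ℝ) ≤ c := by
  classical
  set R : ℝ := ∑ q ∈ P, (|q 0| + |q 1|) with hRdef
  have hR0 : 0 ≤ R := Finset.sum_nonneg (fun q _ => by positivity)
  have hRmem : ∀ q ∈ P, |q 0| ≤ R ∧ |q 1| ≤ R := by
    intro q hq
    have h2 : |q 0| + |q 1| ≤ R := Finset.single_le_sum (f := fun q : E2 => |q 0| + |q 1|)
      (fun r _ => by positivity) hq
    exact ⟨by linarith [abs_nonneg (q 1)], by linarith [abs_nonneg (q 0)]⟩
  set cond : E2 × ℝ → Prop := fun w =>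
    (((n:ℝ) - (n:ℝ)/5 < ((P.filter fun x => (inner ℝ w.1 x : ℝ) ≤ w.2).card : ℝ)) ∨
     (0 ≤ ε * w.1 0 ∧ (n:ℝ) - 2*(n:ℝ)/5 < ((P.filter fun x => (inner ℝ w.1 x : ℝ) ≤ w.2).card : ℝ)))
    with hconddef
  set F : {w : E2 × ℝ // cond w} → Set E2 := fun i =>
    {x : E2 | (inner ℝ i.1.1 x : ℝ) ≤ i.1.2} ∩ Metric.closedBall (0:E2) (4*R) with hFdef
  have hcnt : ∀ i : {w : E2 × ℝ // cond w},
      (n:ℝ) - 2*(n:ℝ)/5 < ((P.filter fun x => (inner ℝ i.1.1 x : ℝ) ≤ i.1.2).card : ℝ) := by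
    intro i
    rcases i.2 with h | h
    · have hn0 : (0:ℝ) ≤ (n:ℝ) := Nat.cast_nonneg n
      linarith
    · exact h.2
  have hpair : ∀ i j : {w : E2 × ℝ // cond w}, ∃ q ∈ P,
      (inner ℝ i.1.1 q : ℝ) ≤ i.1.2 ∧ (inner ℝ j.1.1 q : ℝ) ≤ j.1.2 := by
    intro i j
    apply pair_count
    have h1 := hcnt i
    have h2 := hcnt j
    have hnpos : (0:ℝ) < (n:ℝ) := by exact_mod_cast hn
    have : (P.card : ℝ) <
        ((P.filter fun x => (inner ℝ i.1.1 x : ℝ) ≤ i.1.2).card : ℝ) +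
        ((P.filter fun x => (inner ℝ j.1.1 x : ℝ) ≤ j.1.2).card : ℝ) := by
      rw [hcard]; linarith
    exact_mod_cast this
  have htriple : ∀ i j k : {w : E2 × ℝ // cond w}, (F i ∩ F j ∩ F k).Nonempty := by
    intro i j k
    by_cases hall : 0 ≤ ε * i.1.1 0 ∧ 0 ≤ ε * j.1.1 0 ∧ 0 ≤ ε * k.1.1 0
    · obtain ⟨x12, hx12P, hx12i, hx12j⟩ := hpair i j
      obtain ⟨x13, hx13P, hx13i, hx13k⟩ := hpair i k
      obtain ⟨x23, hx23P, hx23j, hx23k⟩ := hpair j k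
      obtain ⟨z, hz0, hz1, hzi, hzj, hzk⟩ := triple_halfplane R ε hR0 hε
        i.1.1 j.1.1 k.1.1 i.1.2 j.1.2 k.1.2 hall.1 hall.2.1 hall.2.2
        x12 x13 x23 (hRmem _ hx12P).1 (hRmem _ hx12P).2 (hRmem _ hx13P).1 (hRmem _ hx13P).2
        (hRmem _ hx23P).1 (hRmem _ hx23P).2 hx12i hx12j hx13i hx13k hx23j hx23k
      have hzK := mem_ball_of_coords R hR0 z hz0 hz1
      exact ⟨z, ⟨⟨hzi, hzK⟩, ⟨hzj, hzK⟩⟩, ⟨hzk, hzK⟩⟩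
    · have key : ∀ l : {w : E2 × ℝ // cond w}, ¬ (0 ≤ ε * l.1.1 0) →
          (n:ℝ) - (n:ℝ)/5 < ((P.filter fun x => (inner ℝ l.1.1 x : ℝ) ≤ l.1.2).card : ℝ) := by
        intro l hl
        exact l.2.resolve_right (fun hh => hl hh.1)
      have hone : ¬ (0 ≤ ε * i.1.1 0) ∨ ¬ (0 ≤ ε * j.1.1 0) ∨ ¬ (0 ≤ ε * k.1.1 0) := by tauto
      have hbig : 2*(n:ℝ) <
          ((P.filter fun x => (inner ℝ i.1.1 x : ℝ) ≤ i.1.2).card : ℝ) +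
          ((P.filter fun x => (inner ℝ j.1.1 x : ℝ) ≤ j.1.2).card : ℝ) +
          ((P.filter fun x => (inner ℝ k.1.1 x : ℝ) ≤ k.1.2).card : ℝ) := by
        rcases hone with h | h | h
        · have := key i h; have := hcnt j; have := hcnt k; linarith
        · have := key j h; have := hcnt i; have := hcnt k; linarith
        · have := key k h; have := hcnt i; have := hcnt j; linarith
      have hbig' : 2 * P.card <
          (P.filter fun x => (inner ℝ i.1.1 x : ℝ) ≤ i.1.2).card +
          (P.filter fun x => (inner ℝ j.1.1 x : ℝ) ≤ j.1.2).card +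
          (P.filter fun x => (inner ℝ k.1.1 x : ℝ) ≤ k.1.2).card := by
        have : 2*(P.card:ℝ) <
            ((P.filter fun x => (inner ℝ i.1.1 x : ℝ) ≤ i.1.2).card : ℝ) +
            ((P.filter fun x => (inner ℝ j.1.1 x : ℝ) ≤ j.1.2).card : ℝ) +
            ((P.filter fun x => (inner ℝ k.1.1 x : ℝ) ≤ k.1.2).card : ℝ) := by
          rw [hcard]; exact hbig
        exact_mod_cast this
      obtain ⟨q, hqP, hq1, hq2, hq3⟩ := triple_count P _ _ _ hbig'
      have hqK := mem_ball_of_coords R hR0 q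
        (by linarith [(hRmem q hqP).1, abs_nonneg (q 0)]) (hRmem q hqP).2
      exact ⟨q, ⟨⟨hq1, hqK⟩, ⟨hq2, hqK⟩⟩, ⟨hq3, hqK⟩⟩
  have hfinrank : Module.finrank ℝ E2 = 2 := by simp
  have hhelly := Convex.helly_theorem_compact' (𝕜 := ℝ) (F := F)
    (fun i => Convex.inter
      (convex_halfSpace_le ⟨fun a b => inner_add_right i.1.1 a b,
        fun r a => real_inner_smul_right i.1.1 a r⟩ i.1.2)
      (convex_closedBall _ _))
    (fun i => ((isCompact_closedBall (0:E2) (4*R)).inter_left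
      (isClosed_le (innerSL ℝ i.1.1).continuous continuous_const)))
    ?_
  · obtain ⟨p, hp⟩ := hhelly
    refine ⟨p, fun v c h => ?_⟩
    exact (Set.mem_iInter.1 hp ⟨(v, c), h⟩).1
  · intro I hI
    rw [hfinrank] at hI
    have hex : I = ∅ ∨ ∃ a b c : {w : E2 × ℝ // cond w},
        ∀ l ∈ I, l = a ∨ l = b ∨ l = c := by
      have h3 : I.card = 0 ∨ I.card = 1 ∨ I.card = 2 ∨ I.card = 3 := by omega
      rcases h3 with h | h | h | h
      · exact Or.inl (Finset.card_eq_zero.1 h)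
      · obtain ⟨a, rfl⟩ := Finset.card_eq_one.1 h
        exact Or.inr ⟨a, a, a, fun l hl => Or.inl (Finset.mem_singleton.1 hl)⟩
      · obtain ⟨a, b, _, rfl⟩ := Finset.card_eq_two.1 h
        refine Or.inr ⟨a, b, b, fun l hl => ?_⟩
        rcases Finset.mem_insert.1 hl with h | h
        · exact Or.inl h
        · exact Or.inr (Or.inl (Finset.mem_singleton.1 h))
      · obtain ⟨a, b, c, _, _, _, rfl⟩ := Finset.card_eq_three.1 h
        refine Or.inr ⟨a, b, c, fun l hl => ?_⟩
        rcases Finset.mem_insert.1 hl with h | h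
        · exact Or.inl h
        · rcases Finset.mem_insert.1 h with h | h
          · exact Or.inr (Or.inl h)
          · exact Or.inr (Or.inr (Finset.mem_singleton.1 h))
    rcases hex with rfl | ⟨a, b, c, hcov⟩
    · simp
    · obtain ⟨z, hz⟩ := htriple a b c
      refine ⟨z, Set.mem_iInter₂.2 fun l hl => ?_⟩
      rcases hcov l hl with rfl | rfl | rfl
      · exact hz.1.1
      · exact hz.1.2
      · exact hz.2

lemma flip_halfplane (n : ℕ) (P : Finset E2) (hcard : P.card = n) (v : E2) (c : ℝ) (θ : ℝ)
    (hθ : θ ≤ (n:ℝ)) (hlt : ((P.filter fun x => (inner ℝ v x : ℝ) ≤ c).card : ℝ) < θ) :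
    ∃ c' : ℝ, c < c' ∧
      (n:ℝ) - θ < ((P.filter fun x => (inner ℝ (-v) x : ℝ) ≤ -c').card : ℝ) := by
  classical
  set S := P.filter (fun x => ¬ ((inner ℝ v x : ℝ) ≤ c)) with hSdef
  have hcS : (P.filter fun x => (inner ℝ v x : ℝ) ≤ c).card + S.card = n := by
    rw [← hcard, hSdef]
    exact Finset.card_filter_add_card_filter_not _
  have hSne : S.Nonempty := by
    rw [← Finset.card_pos]
    by_contra h
    push_neg at h
    have hS0 : S.card = 0 := by omega
    rw [hS0] at hcS
    have : ((P.filter fun x => (inner ℝ v x : ℝ) ≤ c).card : ℝ) = (n:ℝ) := by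
      exact_mod_cast congrArg (Nat.cast (R := ℝ)) (by omega : (P.filter fun x => (inner ℝ v x : ℝ) ≤ c).card = n)
    linarith
  set M := (S.image fun x => (inner ℝ v x : ℝ)).min' (hSne.image _) with hMdef
  have hcM : c < M := by
    obtain ⟨x, hx, hxM⟩ := Finset.mem_image.1 (Finset.min'_mem (S.image fun x => (inner ℝ v x : ℝ)) (hSne.image _))
    rw [hMdef, ← hxM]
    exact not_le.1 (Finset.mem_filter.1 hx).2
  refine ⟨(c + M)/2, by linarith, ?_⟩
  have hsub : S ⊆ P.filter (fun x => (inner ℝ (-v) x : ℝ) ≤ -((c + M)/2)) := by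
    intro x hx
    refine Finset.mem_filter.2 ⟨(Finset.mem_filter.1 hx).1, ?_⟩
    have hMle : M ≤ (inner ℝ v x : ℝ) :=
      Finset.min'_le _ _ (Finset.mem_image_of_mem _ hx)
    rw [inner_neg_left]
    linarith
  have hle := Finset.card_le_card hsub
  have hcS' : ((P.filter fun x => (inner ℝ v x : ℝ) ≤ c).card : ℝ) + (S.card : ℝ) = (n:ℝ) := by
    exact_mod_cast hcS
  have hle' : (S.card : ℝ) ≤ ((P.filter fun x => (inner ℝ (-v) x : ℝ) ≤ -((c + M)/2)).card : ℝ) := by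
    exact_mod_cast hle
  linarith

/-- For any finite set `P` of `n` points in general position in the plane,
there are two points `p₁, p₂ ∈ ℝ²` such that every closed halfplane containing at least one
of them contains at least `n/5` of the points of `P`, and every closed halfplane containing
both contains at least `2n/5` of the points of `P`. -/
theorem two_points_plane (n : ℕ) (P : Finset (EuclideanSpace ℝ (Fin 2)))
    (hcard : P.card = n)
    (hgp : ∀ p₁ ∈ P, ∀ p₂ ∈ P, ∀ p₃ ∈ P, p₁ ≠ p₂ → p₁ ≠ p₃ → p₂ ≠ p₃ →
      ¬ Collinear ℝ ({p₁, p₂, p₃} : Set (EuclideanSpace ℝ (Fin 2)))) :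
    ∃ p₁ p₂ : EuclideanSpace ℝ (Fin 2),
      (∀ (v : EuclideanSpace ℝ (Fin 2)) (c : ℝ), v ≠ 0 →
        ((inner ℝ v p₁ : ℝ) ≤ c ∨ (inner ℝ v p₂ : ℝ) ≤ c) →
        (n : ℝ) / 5 ≤ (P.filter (fun x => (inner ℝ v x : ℝ) ≤ c)).card) ∧
      (∀ (v : EuclideanSpace ℝ (Fin 2)) (c : ℝ), v ≠ 0 →
        (inner ℝ v p₁ : ℝ) ≤ c → (inner ℝ v p₂ : ℝ) ≤ c →
        2 * (n : ℝ) / 5 ≤ (P.filter (fun x => (inner ℝ v x : ℝ) ≤ c)).card) := by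
  classical
  rcases Nat.eq_zero_or_pos n with hn | hn
  · subst hn
    refine ⟨0, 0, ?_, ?_⟩
    · intro v c _ _
      simp only [Nat.cast_zero, zero_div]
      positivity
    · intro v c _ _ _
      simp only [Nat.cast_zero, mul_zero, zero_div]
      positivity
  obtain ⟨p₁, hp₁⟩ := exists_deep_point n hn P hcard 1 (by norm_num)
  obtain ⟨p₂, hp₂⟩ := exists_deep_point n hn P hcard (-1) (by norm_num)
  have hn0 : (0:ℝ) < (n:ℝ) := by exact_mod_cast hn
  refine ⟨p₁, p₂, ?_, ?_⟩
  · intro v c _ hor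
    by_contra hlt
    push_neg at hlt
    obtain ⟨c', hcc', hbig⟩ := flip_halfplane n P hcard v c ((n:ℝ)/5) (by linarith) hlt
    have hcond : (n:ℝ) - (n:ℝ)/5 <
        ((P.filter fun x => (inner ℝ (-v) x : ℝ) ≤ -c').card : ℝ) := hbig
    rcases hor with h | h
    · have := hp₁ (-v) (-c') (Or.inl hcond)
      rw [inner_neg_left] at this
      linarith
    · have := hp₂ (-v) (-c') (Or.inl hcond)
      rw [inner_neg_left] at this
      linarith
  · intro v c _ h1 h2
    by_contra hlt
    push_neg at hlt
    rw [mul_div_assoc] at hlt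
    obtain ⟨c', hcc', hbig⟩ := flip_halfplane n P hcard v c (2*((n:ℝ)/5)) (by linarith) hlt
    have hbig' : (n:ℝ) - 2*(n:ℝ)/5 <
        ((P.filter fun x => (inner ℝ (-v) x : ℝ) ≤ -c').card : ℝ) := by
      rw [show (n:ℝ) - 2*(n:ℝ)/5 = (n:ℝ) - 2*((n:ℝ)/5) by ring]
      exact hbig
    rcases le_total (v 0) 0 with hs | hs
    · have hsign : 0 ≤ (1:ℝ) * ((-v : E2) 0) := by
        simp only [one_mul]
        have : (-v : E2) 0 = -(v 0) := rfl
        rw [this]; linarith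
      have := hp₁ (-v) (-c') (Or.inr ⟨hsign, hbig'⟩)
      rw [inner_neg_left] at this
      linarith
    · have hsign : 0 ≤ (-1:ℝ) * ((-v : E2) 0) := by
        have : (-v : E2) 0 = -(v 0) := rfl
        rw [this]; linarith
      have := hp₂ (-v) (-c') (Or.inr ⟨hsign, hbig'⟩)
      rw [inner_neg_left] at this
      linarith
end

section
/- For every positive integer k there exists a set P of n = 5k points in general position in the plane such that for every pair of points p₁, p₂ ∈ ℝ² there is a closed halfplane h with either (h contains at least one of p₁, p₂ and h contains at most n/5 points of P) or (h contains both p₁ and p₂ and h contains at most 2n/5 points of P). In other words, one cannot find two points such that every closed halfplane containing one of them contains strictly more than n/5 of the points and every closed halfplane containing both contains strictly more than 2n/5 of the points. -/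
open Real

noncomputable def TPpt (θ : ℝ) : EuclideanSpace ℝ (Fin 2) := WithLp.toLp 2 ![Real.cos θ, Real.sin θ]

lemma TPpt_inner (a b : ℝ) : (inner ℝ (TPpt a) (TPpt b) : ℝ) = Real.cos (a - b) := by
  simp [TPpt, PiLp.inner_apply, Fin.sum_univ_two, Real.cos_sub, RCLike.inner_apply,
    mul_comm]

lemma TPpt_norm (a : ℝ) : ‖TPpt a‖ = 1 := by
  have : ‖TPpt a‖ ^ 2 = 1 := by
    rw [← real_inner_self_eq_norm_sq, TPpt_inner]; simp
  nlinarith [norm_nonneg (TPpt a)]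

lemma TPpt_neg (a : ℝ) : -TPpt a = TPpt (a + π) := by
  ext i
  match i with
  | 0 => show -Real.cos a = Real.cos (a + π); rw [Real.cos_add_pi]
  | 1 => show -Real.sin a = Real.sin (a + π); rw [Real.sin_add_pi]

lemma real_sin_add_sin (a b : ℝ) :
    Real.sin a + Real.sin b = 2 * Real.sin ((a + b)/2) * Real.cos ((a - b)/2) := by
  simpa [sub_neg_eq_add, sub_eq_add_neg] using Real.sin_sub_sin a (-b)

lemma TPpt_add (a b : ℝ) :
    TPpt a + TPpt b = (2 * Real.cos ((a - b)/2)) • TPpt ((a + b)/2) := by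
  ext i
  match i with
  | 0 =>
    show Real.cos a + Real.cos b = (2 * Real.cos ((a - b)/2)) * Real.cos ((a + b)/2)
    rw [Real.cos_add_cos]; ring
  | 1 =>
    show Real.sin a + Real.sin b = (2 * Real.cos ((a - b)/2)) * Real.sin ((a + b)/2)
    rw [real_sin_add_sin]; ring

lemma cos_lip (a b : ℝ) : Real.cos a ≤ Real.cos b + |a - b| := by
  have h := Real.cos_sub_cos a b
  have h1 : |Real.sin ((a+b)/2)| ≤ 1 := Real.abs_sin_le_one _
  have h2 : |Real.sin ((a-b)/2)| ≤ |(a-b)/2| := Real.abs_sin_le_abs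
  have : |Real.cos a - Real.cos b| ≤ |a - b| := by
    rw [h]
    calc |(-2) * Real.sin ((a+b)/2) * Real.sin ((a-b)/2)|
        = 2 * (|Real.sin ((a+b)/2)| * |Real.sin ((a-b)/2)|) := by
          rw [abs_mul, abs_mul]; simp [mul_assoc]
      _ ≤ 2 * (1 * |(a-b)/2|) := by
          apply mul_le_mul_of_nonneg_left _ (by norm_num)
          exact mul_le_mul h1 h2 (abs_nonneg _) zero_le_one
      _ ≤ |a - b| := by rw [one_mul, abs_div, abs_two]; linarith [abs_nonneg (a-b)]
  linarith [abs_le.1 this]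

lemma TPpt_inj {a b : ℝ} (h1 : |a - b| < 2*π) (h : TPpt a = TPpt b) : a = b := by
  have hc : Real.cos a = Real.cos b := congrArg (fun v : EuclideanSpace ℝ (Fin 2) => v 0) h
  have hs : Real.sin a = Real.sin b := congrArg (fun v : EuclideanSpace ℝ (Fin 2) => v 1) h
  have h1' : Real.cos (a - b) = 1 := by
    rw [Real.cos_sub, hc, hs]
    rw [← Real.sin_sq_add_cos_sq b]; ring
  have := (Real.cos_eq_one_iff_of_lt_of_lt (by cases abs_lt.1 h1; linarith)
    (by cases abs_lt.1 h1; linarith)).1 h1'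
  linarith

lemma TPpt_period (x : ℝ) (n : ℤ) : TPpt (x + n * (2*π)) = TPpt x := by
  ext i
  match i with
  | 0 => show Real.cos _ = Real.cos _; rw [Real.cos_add_int_mul_two_pi]
  | 1 => show Real.sin _ = Real.sin _; rw [Real.sin_add_int_mul_two_pi]

lemma sqrt5_lt : Real.sqrt 5 < 2.2361 := by
  rw [show (5:ℝ) = 2.2360679 ^ 2 + (5 - 2.2360679 ^ 2) by ring]
  nlinarith [Real.sq_sqrt (by norm_num : (5:ℝ) ≥ 0), Real.sqrt_nonneg 5]

lemma lt_sqrt5 : 2.236 < Real.sqrt 5 := by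
  nlinarith [Real.sq_sqrt (by norm_num : (5:ℝ) ≥ 0), Real.sqrt_nonneg 5]

lemma cos_two_pi_div_five' : Real.cos (2*π/5) = (Real.sqrt 5 - 1)/4 := by
  have h2 : Real.cos (2*(π/5)) = 2 * Real.cos (π/5) ^ 2 - 1 := Real.cos_two_mul _
  rw [show 2*π/5 = 2*(π/5) by ring, h2, Real.cos_pi_div_five]
  have : Real.sqrt 5 ^ 2 = 5 := Real.sq_sqrt (by norm_num)
  nlinarith [this]

lemma cos_three_pi_div_five' : Real.cos (3*π/5) = -((Real.sqrt 5 - 1)/4) := by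
  rw [show 3*π/5 = π - 2*π/5 by ring, Real.cos_pi_sub, cos_two_pi_div_five']

lemma cos_four_pi_div_five' : Real.cos (4*π/5) = -((1 + Real.sqrt 5)/4) := by
  rw [show 4*π/5 = π - π/5 by ring, Real.cos_pi_sub, Real.cos_pi_div_five]

lemma TPcosu (r : ℤ) (h5 : ¬ ((5:ℤ) ∣ r)) : Real.cos (2*π*r/5) ≤ (Real.sqrt 5 - 1)/4 := by
  obtain ⟨q, s, hqs, h0, h5'⟩ : ∃ q s : ℤ, r = 5 * q + s ∧ 0 ≤ s ∧ s < 5 :=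
    ⟨r / 5, r % 5, (Int.mul_ediv_add_emod r 5).symm, Int.emod_nonneg r (by norm_num),
      Int.emod_lt_of_pos r (by norm_num)⟩
  have hrr : (r:ℝ) = 5*q + s := by exact_mod_cast congrArg (Int.cast : ℤ → ℝ) hqs
  have hr : 2*π*r/5 = 2*π*s/5 + (q:ℤ) * (2*π) := by rw [hrr]; push_cast; ring
  rw [hr, Real.cos_add_int_mul_two_pi]
  have h0 : (0:ℤ) ≤ r % 5 := Int.emod_nonneg r (by norm_num)
  have h5' : r % 5 < 5 := Int.emod_lt_of_pos r (by norm_num)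
  have hne : s ≠ 0 := by rintro rfl; exact h5 (by omega)
  have hs5 : 0 ≤ Real.sqrt 5 := Real.sqrt_nonneg 5
  interval_cases s
  · omega
  · push_cast; rw [show 2*π*1/5 = 2*π/5 by ring, cos_two_pi_div_five']
  · push_cast; rw [show 2*π*2/5 = 4*π/5 by ring, cos_four_pi_div_five']; linarith
  · push_cast
    rw [show 2*π*3/5 = -(4*π/5) + ((1:ℤ)) * (2*π) by push_cast; ring,
      Real.cos_add_int_mul_two_pi, Real.cos_neg, cos_four_pi_div_five']
    linarith
  · push_cast
    rw [show 2*π*4/5 = -(2*π/5) + ((1:ℤ)) * (2*π) by push_cast; ring,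
      Real.cos_add_int_mul_two_pi, Real.cos_neg, cos_two_pi_div_five']

lemma TPcosw (r : ℤ) (h : r % 5 = 1 ∨ r % 5 = 2 ∨ r % 5 = 3) :
    Real.cos (2*π*r/5 + π/5) ≤ -((Real.sqrt 5 - 1)/4) := by
  obtain ⟨q, s, hqs, hs15⟩ : ∃ q s : ℤ, r = 5 * q + s ∧ (s = 1 ∨ s = 2 ∨ s = 3) := by
    refine ⟨r / 5, r % 5, (Int.mul_ediv_add_emod r 5).symm, h⟩
  have hrr : (r:ℝ) = 5*q + s := by exact_mod_cast congrArg (Int.cast : ℤ → ℝ) hqs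
  have hr : 2*π*r/5 + π/5 = (2*π*s/5 + π/5) + (q:ℤ) * (2*π) := by rw [hrr]; push_cast; ring
  rw [hr, Real.cos_add_int_mul_two_pi]
  have hs5 : 2.236 < Real.sqrt 5 := lt_sqrt5
  have hs5' : Real.sqrt 5 < 2.2361 := sqrt5_lt
  rcases hs15 with h' | h' | h' <;> rw [h']
  · push_cast; rw [show 2*π*1/5 + π/5 = 3*π/5 by ring, cos_three_pi_div_five']
  · push_cast; rw [show 2*π*2/5 + π/5 = 0 + ((1:ℤ))*π by push_cast; ring]
    rw [Real.cos_add_int_mul_pi]; simp; linarith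
  · push_cast
    rw [show 2*π*3/5 + π/5 = -(3*π/5) + ((1:ℤ)) * (2*π) by push_cast; ring,
      Real.cos_add_int_mul_two_pi, Real.cos_neg, cos_three_pi_div_five']

lemma fin5_pigeon : ∀ S : Finset (Fin 5), 3 ≤ S.card → ∃ i ∈ S, i + 2 ∈ S := by decide

lemma TP_count_le {α β : Type*} [DecidableEq α] [DecidableEq β] (s : Finset α) (f : α → β)
    (p : β → Prop) [DecidablePred p] (t : Finset α) (h : ∀ a ∈ s, p (f a) → a ∈ t) :
    ((s.image f).filter p).card ≤ t.card := by
  rw [Finset.filter_image]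
  exact le_trans Finset.card_image_le
    (Finset.card_le_card fun a ha => h a (Finset.mem_filter.1 ha).1 (Finset.mem_filter.1 ha).2)

lemma TP_card_one {k : ℕ} (m : Fin 5) :
    ((Finset.univ : Finset (Fin 5 × Fin k)).filter (fun x => x.1 = m)).card = k := by
  have : ((Finset.univ : Finset (Fin 5 × Fin k)).filter (fun x => x.1 = m))
      = {m} ×ˢ Finset.univ := by
    ext ⟨a, b⟩
    simp [Finset.mem_product, eq_comm]
  rw [this, Finset.card_product]
  simp

lemma TP_card_two {k : ℕ} (m m' : Fin 5) (hne : m ≠ m') :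
    ((Finset.univ : Finset (Fin 5 × Fin k)).filter (fun x => x.1 = m ∨ x.1 = m')).card
      = 2 * k := by
  have : ((Finset.univ : Finset (Fin 5 × Fin k)).filter (fun x => x.1 = m ∨ x.1 = m'))
      = ({m, m'} : Finset (Fin 5)) ×ˢ Finset.univ := by
    ext ⟨a, b⟩
    simp [Finset.mem_product]
  rw [this, Finset.card_product, Finset.card_pair hne]
  simp

set_option maxHeartbeats 2000000


/-- For every positive integer `k` there is a set `P` of `n = 5k` points in
general position in the plane witnessing the tightness of the two-point theorem: for every
pair of points `p₁, p₂ ∈ ℝ²` there is a closed halfplane that either contains one of the two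
points but at most `n/5` points of `P`, or contains both points but at most `2n/5` points
of `P`. -/
theorem two_points_plane_tight (k : ℕ) (hk : 0 < k) :
    ∃ P : Finset (EuclideanSpace ℝ (Fin 2)),
      P.card = 5 * k ∧
      (∀ p₁ ∈ P, ∀ p₂ ∈ P, ∀ p₃ ∈ P, p₁ ≠ p₂ → p₁ ≠ p₃ → p₂ ≠ p₃ →
        ¬ Collinear ℝ ({p₁, p₂, p₃} : Set (EuclideanSpace ℝ (Fin 2)))) ∧
      ∀ p₁ p₂ : EuclideanSpace ℝ (Fin 2),
        ∃ (v : EuclideanSpace ℝ (Fin 2)) (c : ℝ), v ≠ 0 ∧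
          ((((inner ℝ v p₁ : ℝ) ≤ c ∨ (inner ℝ v p₂ : ℝ) ≤ c) ∧
              ((P.filter (fun x => (inner ℝ v x : ℝ) ≤ c)).card : ℝ) ≤ (5 * k : ℝ) / 5) ∨
            (((inner ℝ v p₁ : ℝ) ≤ c ∧ (inner ℝ v p₂ : ℝ) ≤ c) ∧
              ((P.filter (fun x => (inner ℝ v x : ℝ) ≤ c)).card : ℝ) ≤ 2 * (5 * k : ℝ) / 5)) := by
  classical
  have hπ : 3.14 < π := by linarith [Real.pi_gt_d6]
  set c5 : ℝ := (Real.sqrt 5 - 1)/4 with hc5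
  have hc5l : 0.3 < c5 := by rw [hc5]; linarith [lt_sqrt5]
  have hc5u : c5 < 0.31 := by rw [hc5]; linarith [sqrt5_lt]
  have hkR : (1:ℝ) ≤ (k:ℝ) := by exact_mod_cast hk
  -- the offsets
  set dd : Fin k → ℝ := fun i => ((i:ℕ)+1)/(100*k) with hdd
  have hdpos : ∀ i : Fin k, 0 < dd i := by
    intro i; apply div_pos (by positivity) (by positivity)
  have hdle : ∀ i : Fin k, dd i ≤ 1/100 := by
    intro i
    rw [hdd, div_le_div_iff₀ (by positivity) (by norm_num)]
    have : ((i:ℕ):ℝ) + 1 ≤ (k:ℝ) := by exact_mod_cast i.2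
    linarith
  -- the angles and points
  set θ : Fin 5 × Fin k → ℝ := fun x => 2*π*(x.1:ℕ)/5 + dd x.2 with hθ
  set f : Fin 5 × Fin k → EuclideanSpace ℝ (Fin 2) := fun x => TPpt (θ x) with hf
  have hj4 : ∀ j : Fin 5, ((j:ℕ):ℝ) ≤ 4 := by
    intro j; exact_mod_cast Nat.lt_succ_iff.1 j.2
  have hθbounds : ∀ x, 0 < θ x ∧ θ x < 2*π := by
    intro x
    constructor
    · have := hdpos x.2
      have : 0 ≤ 2*π*(x.1:ℕ)/5 := by positivity
      have := hdpos x.2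
      rw [hθ]; dsimp only; linarith
    · have h1 : 2*π*((x.1:ℕ):ℝ)/5 ≤ 2*π*4/5 := by
        have := hj4 x.1; nlinarith
      have := hdle x.2
      rw [hθ]; dsimp only; nlinarith
  have hinj : Function.Injective f := by
    intro x y hxy
    have hth : θ x = θ y := by
      apply TPpt_inj _ hxy
      have b1 := hθbounds x; have b2 := hθbounds y
      rw [abs_lt]; constructor <;> linarith [b1.1, b1.2, b2.1, b2.2]
    have hj : x.1 = y.1 := by
      by_contra hne
      have hne' : ((x.1:ℕ):ℤ) ≠ ((y.1:ℕ):ℤ) := by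
        intro h; apply hne; apply Fin.ext; exact_mod_cast h
      have h1 : (1:ℤ) ≤ |((x.1:ℕ):ℤ) - ((y.1:ℕ):ℤ)| := Int.one_le_abs (sub_ne_zero.2 hne')
      have h1' : (1:ℝ) ≤ |((x.1:ℕ):ℝ) - ((y.1:ℕ):ℝ)| := by exact_mod_cast h1
      have heq : 2*π*((x.1:ℕ):ℝ)/5 - 2*π*((y.1:ℕ):ℝ)/5 = dd y.2 - dd x.2 := by
        rw [hθ] at hth; dsimp only at hth; linarith
      have habs : |2*π*((x.1:ℕ):ℝ)/5 - 2*π*((y.1:ℕ):ℝ)/5|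
          = 2*π/5 * |((x.1:ℕ):ℝ) - ((y.1:ℕ):ℝ)| := by
        rw [← abs_of_pos (show (0:ℝ) < 2*π/5 by linarith), ← abs_mul]
        ring_nf
      have hsmall : |dd y.2 - dd x.2| < 1/100 := by
        have := hdpos x.2; have := hdpos y.2; have := hdle x.2; have := hdle y.2
        rw [abs_lt]; constructor <;> linarith
      rw [← heq, habs] at hsmall
      nlinarith [abs_nonneg (((x.1:ℕ):ℝ) - ((y.1:ℕ):ℝ))]
    have hi : x.2 = y.2 := by
      rw [hθ] at hth; dsimp only at hth
      rw [hj] at hth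
      have h2 : dd x.2 = dd y.2 := by linarith
      rw [hdd] at h2; dsimp only at h2
      have h100 : (100:ℝ)*(k:ℝ) ≠ 0 := by positivity
      rw [div_eq_div_iff (by positivity) (by positivity)] at h2
      have h3 : ((x.2:ℕ):ℝ) = ((y.2:ℕ):ℝ) := by
        have hkne : (0:ℝ) < 100*(k:ℝ) := by positivity
        nlinarith
      apply Fin.ext
      exact_mod_cast h3
    exact Prod.ext hj hi
  refine ⟨Finset.image f Finset.univ, ?_, ?_, ?_⟩
  · rw [Finset.card_image_of_injective _ hinj]
    simp [Finset.card_univ, mul_comm]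
  · -- general position via cosphericity
    have hsph : EuclideanGeometry.Cospherical
        ((↑(Finset.image f Finset.univ) : Set (EuclideanSpace ℝ (Fin 2)))) := by
      refine ⟨0, 1, ?_⟩
      intro p hp
      rw [Finset.mem_coe, Finset.mem_image] at hp
      obtain ⟨x, -, rfl⟩ := hp
      rw [dist_zero_right]
      exact TPpt_norm _
    intro p₁ h₁ p₂ h₂ p₃ h₃ h12 h13 h23
    exact affineIndependent_iff_not_collinear_set.1
      (hsph.affineIndependent_of_mem_of_ne (Finset.mem_coe.2 h₁) (Finset.mem_coe.2 h₂)
        (Finset.mem_coe.2 h₃) h12 h13 h23)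
  intro p₁ p₂
  -- exclusion lemma for single-cluster halfplanes
  have excl1 : ∀ (m : Fin 5) (x : Fin 5 × Fin k), x.1 ≠ m →
      (inner ℝ (TPpt (2*π*((m:ℕ):ℝ)/5)) (f x) : ℝ) < 2/5 := by
    intro m x hne
    rw [hf]; dsimp only
    rw [TPpt_inner]
    set r : ℤ := ((m:ℕ):ℤ) - ((x.1:ℕ):ℤ) with hr
    have hang : 2*π*((m:ℕ):ℝ)/5 - θ x = 2*π*(r:ℝ)/5 - dd x.2 := by
      rw [hθ, hr]; push_cast; ring
    rw [hang]
    have hlip := cos_lip (2*π*(r:ℝ)/5 - dd x.2) (2*π*(r:ℝ)/5)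
    have hcr : Real.cos (2*π*(r:ℝ)/5) ≤ c5 := by
      apply TPcosu
      have hm5 : (m:ℕ) < 5 := m.2
      have hx5 : (x.1:ℕ) < 5 := x.1.2
      have : (m:ℕ) ≠ (x.1:ℕ) := fun h => hne (Fin.ext h.symm)
      omega
    have hda := hdpos x.2; have hdb := hdle x.2
    have habs : |2*π*(r:ℝ)/5 - dd x.2 - 2*π*(r:ℝ)/5| = dd x.2 := by
      rw [show 2*π*(r:ℝ)/5 - dd x.2 - 2*π*(r:ℝ)/5 = -(dd x.2) by ring, abs_neg,
        abs_of_pos hda]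
    rw [habs] at hlip
    linarith
  have hu_ne : ∀ a : ℝ, TPpt a ≠ 0 := by
    intro a h
    have := TPpt_norm a
    rw [h, norm_zero] at this; norm_num at this
  -- Option 1 halfplane: count bound
  have count1 : ∀ m : Fin 5,
      (((Finset.image f Finset.univ).filter
        (fun x => (inner ℝ (-(TPpt (2*π*((m:ℕ):ℝ)/5))) x : ℝ) ≤ -(2/5))).card : ℝ)
        ≤ (5*k : ℝ)/5 := by
    intro m
    have hnat : ((Finset.image f Finset.univ).filter
        (fun x => (inner ℝ (-(TPpt (2*π*((m:ℕ):ℝ)/5))) x : ℝ) ≤ -(2/5))).card ≤ k := by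
      have := TP_count_le Finset.univ f
        (fun x => (inner ℝ (-(TPpt (2*π*((m:ℕ):ℝ)/5))) x : ℝ) ≤ -(2/5))
        (Finset.univ.filter (fun x => x.1 = m)) ?_
      · calc _ ≤ _ := this
          _ = k := TP_card_one m
      · intro a _ hpa
        rw [Finset.mem_filter]
        refine ⟨Finset.mem_univ _, ?_⟩
        by_contra hne
        have := excl1 m a hne
        rw [inner_neg_left] at hpa
        linarith
    calc ((_ : ℕ) : ℝ) ≤ (k:ℝ) := by exact_mod_cast hnat
      _ = (5*k:ℝ)/5 := by push_cast; ring
  by_cases h1 : ∃ m : Fin 5, (2/5 : ℝ) ≤ (inner ℝ (TPpt (2*π*((m:ℕ):ℝ)/5)) p₁ : ℝ)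
  · obtain ⟨m, hm⟩ := h1
    refine ⟨-(TPpt (2*π*((m:ℕ):ℝ)/5)), -(2/5), ?_, Or.inl ⟨Or.inl ?_, count1 m⟩⟩
    · simpa using hu_ne (2*π*((m:ℕ):ℝ)/5)
    · rw [inner_neg_left]; linarith
  by_cases h2 : ∃ m : Fin 5, (2/5 : ℝ) ≤ (inner ℝ (TPpt (2*π*((m:ℕ):ℝ)/5)) p₂ : ℝ)
  · obtain ⟨m, hm⟩ := h2
    refine ⟨-(TPpt (2*π*((m:ℕ):ℝ)/5)), -(2/5), ?_, Or.inl ⟨Or.inr ?_, count1 m⟩⟩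
    · simpa using hu_ne (2*π*((m:ℕ):ℝ)/5)
    · rw [inner_neg_left]; linarith
  -- deep case
  push_neg at h1 h2
  have hdeep : ∀ (p : EuclideanSpace ℝ (Fin 2)),
      (∀ m : Fin 5, (inner ℝ (TPpt (2*π*((m:ℕ):ℝ)/5)) p : ℝ) < 2/5) →
      ∀ m : ℕ, (inner ℝ (TPpt (2*π*(m:ℝ)/5)) p : ℝ) < 2/5 := by
    intro p hp m
    have hmod : TPpt (2*π*(m:ℝ)/5) = TPpt (2*π*((m % 5 : ℕ):ℝ)/5) := by
      have hm : (m:ℝ) = ((m % 5 : ℕ):ℝ) + 5*((m / 5 : ℕ):ℝ) := by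
        exact_mod_cast (Nat.mod_add_div m 5).symm
      rw [show 2*π*(m:ℝ)/5 = 2*π*((m % 5 : ℕ):ℝ)/5 + (((m/5 : ℕ):ℤ):ℝ) * (2*π) by
        rw [Int.cast_natCast, hm]; ring]
      rw [TPpt_period]
    rw [hmod]
    exact hp ⟨m % 5, Nat.mod_lt _ (by norm_num)⟩
  have hdeep1 := hdeep p₁ h1
  have hdeep2 := hdeep p₂ h2
  -- the w directions
  set w : ℕ → EuclideanSpace ℝ (Fin 2) := fun m => -TPpt (2*π*(m:ℝ)/5 + π/5) with hw
  set σ : ℝ := c5 * (2/5) with hσ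
  have wsum : ∀ (m : ℕ) (p : EuclideanSpace ℝ (Fin 2)),
      (inner ℝ (w m) p : ℝ) + (inner ℝ (w (m+2)) p : ℝ)
        = 2*c5 * (inner ℝ (TPpt (2*π*((m+4 : ℕ):ℝ)/5)) p : ℝ) := by
    intro m p
    have hvec : w m + w (m+2) = (2*c5) • TPpt (2*π*((m+4 : ℕ):ℝ)/5) := by
      rw [hw]; dsimp only
      rw [← neg_add, TPpt_add]
      have h1 : ((2*π*(m:ℝ)/5 + π/5) - (2*π*((m+2:ℕ):ℝ)/5 + π/5))/2 = -(2*π/5) := by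
        push_cast; ring
      have h2 : ((2*π*(m:ℝ)/5 + π/5) + (2*π*((m+2:ℕ):ℝ)/5 + π/5))/2
          = 2*π*((m+1:ℕ):ℝ)/5 + π/5 := by push_cast; ring
      rw [h1, h2, Real.cos_neg, cos_two_pi_div_five', ← hc5, ← smul_neg, TPpt_neg]
      congr 1
      push_cast; ring
    have := congrArg (fun z => (inner ℝ z p : ℝ)) hvec
    rw [inner_add_left, real_inner_smul_left] at this
    rw [this]
  have wmod : ∀ m : ℕ, w (m % 5) = w m := by
    intro m
    rw [hw]; dsimp only
    congr 1
    have hm : (m:ℝ) = ((m % 5 : ℕ):ℝ) + 5*((m / 5 : ℕ):ℝ) := by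
      exact_mod_cast (Nat.mod_add_div m 5).symm
    rw [show 2*π*(m:ℝ)/5 + π/5 = (2*π*((m % 5 : ℕ):ℝ)/5 + π/5) + (((m/5 : ℕ):ℤ):ℝ) * (2*π) by
      rw [Int.cast_natCast, hm]; ring]
    rw [TPpt_period]
  have deepA : ∀ (p : EuclideanSpace ℝ (Fin 2)),
      (∀ m : ℕ, (inner ℝ (TPpt (2*π*(m:ℝ)/5)) p : ℝ) < 2/5) →
      3 ≤ (Finset.univ.filter (fun m : Fin 5 => ¬ (σ < (inner ℝ (w (m:ℕ)) p : ℝ)))).card := by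
    intro p hp
    have hbad : (Finset.univ.filter (fun m : Fin 5 => σ < (inner ℝ (w (m:ℕ)) p : ℝ))).card ≤ 2 := by
      by_contra hc
      push_neg at hc
      obtain ⟨i, hi, hi2⟩ := fin5_pigeon _ hc
      rw [Finset.mem_filter] at hi hi2
      have hw2 : w (((i+2 : Fin 5)):ℕ) = w ((i:ℕ)+2) := by
        have h' : (((i+2 : Fin 5)):ℕ) = ((i:ℕ)+2) % 5 := by
          simp [Fin.add_def]
        rw [h', wmod]
      rw [hw2] at hi2
      have hsum := wsum (i:ℕ) p
      have hdeepm := hp ((i:ℕ)+4)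
      nlinarith [hi.2, hi2.2]
    have htot := Finset.card_filter_add_card_filter_not
      (s := (Finset.univ : Finset (Fin 5)))
      (p := fun m : Fin 5 => σ < (inner ℝ (w (m:ℕ)) p : ℝ))
    simp only [Finset.card_univ, Fintype.card_fin] at htot
    omega
  have hA1 := deepA p₁ hdeep1
  have hA2 := deepA p₂ hdeep2
  set A₁ := Finset.univ.filter (fun m : Fin 5 => ¬ (σ < (inner ℝ (w (m:ℕ)) p₁ : ℝ))) with hA₁
  set A₂ := Finset.univ.filter (fun m : Fin 5 => ¬ (σ < (inner ℝ (w (m:ℕ)) p₂ : ℝ))) with hA₂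
  have hinter : (A₁ ∩ A₂).Nonempty := by
    rw [← Finset.card_pos]
    have hu := Finset.card_union_add_card_inter A₁ A₂
    have : (A₁ ∪ A₂).card ≤ 5 := by
      calc (A₁ ∪ A₂).card ≤ (Finset.univ : Finset (Fin 5)).card :=
            Finset.card_le_card (Finset.subset_univ _)
        _ = 5 := by simp
    omega
  obtain ⟨m, hm⟩ := hinter
  rw [Finset.mem_inter, hA₁, hA₂, Finset.mem_filter, Finset.mem_filter] at hm
  have hm1 : (inner ℝ (w ((m:ℕ))) p₁ : ℝ) ≤ σ := not_lt.1 hm.1.2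
  have hm2 : (inner ℝ (w ((m:ℕ))) p₂ : ℝ) ≤ σ := not_lt.1 hm.2.2
  refine ⟨w (m:ℕ), σ, ?_, Or.inr ⟨⟨hm1, hm2⟩, ?_⟩⟩
  · rw [hw]; dsimp only; simpa using hu_ne (2*π*((m:ℕ):ℝ)/5 + π/5)
  -- count for deep halfplane
  have hmm1 : m ≠ m + 1 := by
    intro h
    have := congrArg Fin.val h
    rw [Fin.val_add] at this
    have hm5 : (m:ℕ) < 5 := m.2
    simp at this
    omega
  have excl2 : ∀ x : Fin 5 × Fin k, ¬(x.1 = m ∨ x.1 = m + 1) →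
      σ < (inner ℝ (w (m:ℕ)) (f x) : ℝ) := by
    intro x hx
    push_neg at hx
    rw [hw, hf]; dsimp only
    rw [inner_neg_left, TPpt_inner]
    set r : ℤ := ((m:ℕ):ℤ) - ((x.1:ℕ):ℤ) with hr
    have hang : (2*π*((m:ℕ):ℝ)/5 + π/5) - θ x = (2*π*(r:ℝ)/5 + π/5) - dd x.2 := by
      rw [hθ, hr]; push_cast; ring
    rw [hang]
    have hlip := cos_lip ((2*π*(r:ℝ)/5 + π/5) - dd x.2) (2*π*(r:ℝ)/5 + π/5)
    have hcr : Real.cos (2*π*(r:ℝ)/5 + π/5) ≤ -c5 := by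
      rw [hc5]
      apply TPcosw
      have hm5 : (m:ℕ) < 5 := m.2
      have hx5 : (x.1:ℕ) < 5 := x.1.2
      have hxm : (x.1:ℕ) ≠ (m:ℕ) := fun h => hx.1 (Fin.ext h)
      have hxm1 : (x.1:ℕ) ≠ ((m:ℕ)+1) % 5 := by
        intro h
        apply hx.2
        apply Fin.ext
        rw [h, Fin.val_add]
        simp
      omega
    have hda := hdpos x.2; have hdb := hdle x.2
    have habs : |(2*π*(r:ℝ)/5 + π/5) - dd x.2 - (2*π*(r:ℝ)/5 + π/5)| = dd x.2 := by
      rw [show (2*π*(r:ℝ)/5 + π/5) - dd x.2 - (2*π*(r:ℝ)/5 + π/5) = -(dd x.2) by ring,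
        abs_neg, abs_of_pos hda]
    rw [habs] at hlip
    rw [hσ]
    nlinarith
  have hnat : ((Finset.image f Finset.univ).filter
      (fun x => (inner ℝ (w (m:ℕ)) x : ℝ) ≤ σ)).card ≤ 2 * k := by
    have := TP_count_le Finset.univ f
      (fun x => (inner ℝ (w (m:ℕ)) x : ℝ) ≤ σ)
      (Finset.univ.filter (fun x => x.1 = m ∨ x.1 = m + 1)) ?_
    · calc _ ≤ _ := this
        _ = 2 * k := TP_card_two m (m+1) hmm1
    · intro a _ hpa
      rw [Finset.mem_filter]
      refine ⟨Finset.mem_univ _, ?_⟩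
      by_contra hne
      exact absurd hpa (not_le.2 (excl2 a hne))
  calc ((_ : ℕ) : ℝ) ≤ ((2*k : ℕ):ℝ) := by exact_mod_cast hnat
    _ = 2*(5*k:ℝ)/5 := by push_cast; ring
end

section
/- Let μ be a mass distribution on ℝ^d with μ(ℝ^d) = 1 and let k be a positive integer. Then there exist k points p₁, …, p_k in ℝ^d whose generalized Tukey depth with respect to μ is at least 1/(kd+1); that is, for every closed halfspace h containing at least one of the points p₁, …, p_k, μ(h) ≥ m/(kd+1), where m is the number of the points p₁, …, p_k contained in h. -/
set_option linter.unusedSectionVars false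
set_option maxHeartbeats 1000000

open MeasureTheory Set Filter
open scoped RealInnerProductSpace ENNReal Topology

namespace GTDepth

variable {E : Type*} [NormedAddCommGroup E] [InnerProductSpace ℝ E]
  [MeasurableSpace E] [BorelSpace E]
  (μ : Measure E) [IsProbabilityMeasure μ]

lemma cont_inner (v : E) : Continuous fun x : E => ⟪v, x⟫ :=
  continuous_const.inner continuous_id

lemma meas_le (v : E) (c : ℝ) : MeasurableSet {x : E | ⟪v, x⟫ ≤ c} :=
  measurableSet_le (cont_inner v).measurable measurable_const

lemma meas_lt (v : E) (c : ℝ) : MeasurableSet {x : E | ⟪v, x⟫ < c} :=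
  measurableSet_lt (cont_inner v).measurable measurable_const

/-- the CDF in direction `v` -/
noncomputable def Fc (v : E) (c : ℝ) : ℝ := (μ {x : E | ⟪v, x⟫ ≤ c}).toReal

lemma Fc_mono (v : E) : Monotone (Fc μ v) := by
  intro a b hab
  have h : {x : E | ⟪v, x⟫ ≤ a} ⊆ {x : E | ⟪v, x⟫ ≤ b} := fun x hx => le_trans hx hab
  exact ENNReal.toReal_mono (measure_ne_top μ _) (measure_mono h)

lemma Fc_nonneg (v : E) (c : ℝ) : 0 ≤ Fc μ v c := ENNReal.toReal_nonneg

lemma measure_le_eq_ofReal_Fc (v : E) (c : ℝ) :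
    μ {x : E | ⟪v, x⟫ ≤ c} = ENNReal.ofReal (Fc μ v c) :=
  (ENNReal.ofReal_toReal (measure_ne_top μ _)).symm

lemma exists_Fc_ge (v : E) {β : ℝ} (hβ : β < 1) : ∃ c, β ≤ Fc μ v c := by
  by_contra h
  push_neg at h
  have hmono : Monotone fun n : ℕ => {x : E | ⟪v, x⟫ ≤ (n : ℝ)} := by
    intro a b hab x hx
    simp only [mem_setOf_eq] at hx ⊢
    exact le_trans hx (by exact_mod_cast hab)
  have hU : ⋃ n : ℕ, {x : E | ⟪v, x⟫ ≤ (n : ℝ)} = univ := by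
    ext x
    simp only [mem_iUnion, mem_setOf_eq, mem_univ, iff_true]
    obtain ⟨n, hn⟩ := exists_nat_ge (⟪v, x⟫)
    exact ⟨n, hn⟩
  have h1 : μ (⋃ n : ℕ, {x : E | ⟪v, x⟫ ≤ (n : ℝ)})
      = ⨆ n : ℕ, μ {x : E | ⟪v, x⟫ ≤ (n : ℝ)} :=
    Directed.measure_iUnion hmono.directed_le
  rw [hU, measure_univ] at h1
  have h2 : (1 : ℝ≥0∞) ≤ ENNReal.ofReal β := by
    rw [h1]
    refine iSup_le fun n => ?_
    rw [measure_le_eq_ofReal_Fc]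
    exact ENNReal.ofReal_le_ofReal (h n).le
  exact absurd (lt_of_le_of_lt h2 (ENNReal.ofReal_lt_one.2 hβ)) (lt_irrefl _)

lemma exists_Fc_lt (v : E) {β : ℝ} (hβ : 0 < β) : ∃ c, Fc μ v c < β := by
  by_contra h
  push_neg at h
  have hanti : Antitone fun n : ℕ => {x : E | ⟪v, x⟫ ≤ -(n : ℝ)} := by
    intro a b hab x hx
    simp only [mem_setOf_eq] at hx ⊢
    have : -(b:ℝ) ≤ -(a:ℝ) := by exact_mod_cast neg_le_neg (Nat.cast_le.2 hab)
    linarith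
  have hI : ⋂ n : ℕ, {x : E | ⟪v, x⟫ ≤ -(n : ℝ)} = (∅ : Set E) := by
    ext x
    simp only [mem_iInter, mem_setOf_eq, mem_empty_iff_false, iff_false, not_forall]
    obtain ⟨n, hn⟩ := exists_nat_gt (-(⟪v, x⟫))
    exact ⟨n, by push_neg; linarith⟩
  have h1 : Tendsto (fun n : ℕ => μ {x : E | ⟪v, x⟫ ≤ -(n : ℝ)}) atTop
      (𝓝 (μ (⋂ n : ℕ, {x : E | ⟪v, x⟫ ≤ -(n : ℝ)}))) :=
    tendsto_measure_iInter_atTop (s := fun n : ℕ => {x : E | ⟪v, x⟫ ≤ -(n : ℝ)})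
      (fun n => (meas_le v _).nullMeasurableSet) hanti ⟨0, measure_ne_top μ _⟩
  rw [hI, measure_empty] at h1
  have h2 : ∀ n : ℕ, ENNReal.ofReal β ≤ μ {x : E | ⟪v, x⟫ ≤ -(n : ℝ)} := by
    intro n
    rw [measure_le_eq_ofReal_Fc]
    exact ENNReal.ofReal_le_ofReal (h _)
  have h3 : ENNReal.ofReal β ≤ 0 := ge_of_tendsto' h1 h2
  simp only [nonpos_iff_eq_zero, ENNReal.ofReal_eq_zero] at h3
  linarith

/-- the β-quantile in direction v -/
noncomputable def Qu (v : E) (β : ℝ) : ℝ := sInf {c | β ≤ Fc μ v c}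

lemma Qu_bddBelow (v : E) {β : ℝ} (hβ : 0 < β) : BddBelow {c | β ≤ Fc μ v c} := by
  obtain ⟨c₀, hc₀⟩ := exists_Fc_lt μ v hβ
  refine ⟨c₀, fun c hc => ?_⟩
  by_contra hlt
  push_neg at hlt
  exact absurd (le_trans hc (Fc_mono μ v hlt.le)) (not_le.2 hc₀)

lemma Qu_nonempty (v : E) {β : ℝ} (hβ : β < 1) : {c | β ≤ Fc μ v c}.Nonempty :=
  exists_Fc_ge μ v hβ

lemma Qu_le (v : E) {β c : ℝ} (hβ : 0 < β) (h : β ≤ Fc μ v c) : Qu μ v β ≤ c :=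
  csInf_le (Qu_bddBelow μ v hβ) h

lemma le_Fc_of_Qu_le (v : E) {β c : ℝ} (hβ0 : 0 < β) (hβ1 : β < 1)
    (h : Qu μ v β ≤ c) : β ≤ Fc μ v c := by
  have key : ∀ n : ℕ, β ≤ Fc μ v (Qu μ v β + 1/(n+1)) := by
    intro n
    have hlt : Qu μ v β < Qu μ v β + 1/(n+1) := by
      have : (0:ℝ) < 1/(n+1) := by positivity
      linarith
    obtain ⟨c', hc', hc'lt⟩ :=
      (csInf_lt_iff (Qu_bddBelow μ v hβ0) (Qu_nonempty μ v hβ1)).1 hlt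
    exact le_trans hc' (Fc_mono μ v hc'lt.le)
  have hanti : Antitone fun n : ℕ => {x : E | ⟪v, x⟫ ≤ Qu μ v β + 1/(n+1)} := by
    intro a b hab x hx
    simp only [mem_setOf_eq] at hx ⊢
    have : (1:ℝ)/(b+1) ≤ 1/(a+1) := by
      apply one_div_le_one_div_of_le
      · positivity
      · exact_mod_cast Nat.succ_le_succ hab
    linarith
  have hIeq : ⋂ n : ℕ, {x : E | ⟪v, x⟫ ≤ Qu μ v β + 1/(n+1)} =
      {x : E | ⟪v, x⟫ ≤ Qu μ v β} := by
    ext x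
    simp only [mem_iInter, mem_setOf_eq]
    constructor
    · intro hx
      by_contra hgt
      push_neg at hgt
      obtain ⟨n, hn⟩ := exists_nat_one_div_lt (by linarith : (0:ℝ) < ⟪v, x⟫ - Qu μ v β)
      have h1 := hx n
      have h2 : (1:ℝ)/(n+1) < ⟪v, x⟫ - Qu μ v β := by exact_mod_cast hn
      linarith
    · intro hx n
      have : (0:ℝ) < 1/(n+1) := by positivity
      linarith
  have h1 : Tendsto (fun n : ℕ => μ {x : E | ⟪v, x⟫ ≤ Qu μ v β + 1/(n+1)}) atTop
      (𝓝 (μ {x : E | ⟪v, x⟫ ≤ Qu μ v β})) := by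
    have := tendsto_measure_iInter_atTop (μ := μ)
      (s := fun n : ℕ => {x : E | ⟪v, x⟫ ≤ Qu μ v β + 1/(n+1)})
      (fun n => (meas_le v _).nullMeasurableSet) hanti ⟨0, measure_ne_top μ _⟩
    rwa [hIeq] at this
  have h2 : Tendsto (fun n : ℕ => Fc μ v (Qu μ v β + 1/(n+1))) atTop
      (𝓝 (Fc μ v (Qu μ v β))) :=
    (ENNReal.tendsto_toReal (measure_ne_top μ _)).comp h1
  exact le_trans (ge_of_tendsto' h2 key) (Fc_mono μ v h)

lemma Fc_Qu_le (v : E) (hnull : ∀ c : ℝ, μ {x : E | ⟪v, x⟫ = c} = 0)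
    {β : ℝ} (hβ0 : 0 < β) (hβ1 : β < 1) : Fc μ v (Qu μ v β) ≤ β := by
  -- every c < Qu has Fc < β
  have hlt : ∀ c, c < Qu μ v β → Fc μ v c < β := by
    intro c hc
    by_contra hge
    push_neg at hge
    exact absurd (Qu_le μ v hβ0 hge) (not_le.2 hc)
  -- {x | ⟪v,x⟫ < Qu} as increasing union
  have hmono : Monotone fun n : ℕ => {x : E | ⟪v, x⟫ ≤ Qu μ v β - 1/(n+1)} := by
    intro a b hab x hx
    simp only [mem_setOf_eq] at hx ⊢
    have : (1:ℝ)/(b+1) ≤ 1/(a+1) := by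
      apply one_div_le_one_div_of_le
      · positivity
      · exact_mod_cast Nat.succ_le_succ hab
    linarith
  have hUeq : ⋃ n : ℕ, {x : E | ⟪v, x⟫ ≤ Qu μ v β - 1/(n+1)} =
      {x : E | ⟪v, x⟫ < Qu μ v β} := by
    ext x
    simp only [mem_iUnion, mem_setOf_eq]
    constructor
    · rintro ⟨n, hn⟩
      have : (0:ℝ) < 1/(n+1) := by positivity
      linarith
    · intro hx
      obtain ⟨n, hn⟩ := exists_nat_one_div_lt (by linarith : (0:ℝ) < Qu μ v β - ⟪v, x⟫)
      have h2 : (1:ℝ)/(n+1) < Qu μ v β - ⟪v, x⟫ := by exact_mod_cast hn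
      exact ⟨n, by linarith⟩
  have hUb : μ {x : E | ⟪v, x⟫ < Qu μ v β} ≤ ENNReal.ofReal β := by
    rw [← hUeq]
    rw [Directed.measure_iUnion hmono.directed_le]
    refine iSup_le fun n => ?_
    rw [measure_le_eq_ofReal_Fc]
    refine ENNReal.ofReal_le_ofReal ?_
    have : Qu μ v β - 1/(n+1) < Qu μ v β := by
      have : (0:ℝ) < 1/(n+1) := by positivity
      linarith
    exact (hlt _ this).le
  -- closed = open + boundary
  have hsplit : μ {x : E | ⟪v, x⟫ ≤ Qu μ v β} ≤ ENNReal.ofReal β := by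
    have : {x : E | ⟪v, x⟫ ≤ Qu μ v β} ⊆
        {x : E | ⟪v, x⟫ < Qu μ v β} ∪ {x : E | ⟪v, x⟫ = Qu μ v β} := by
      intro x hx
      simp only [mem_setOf_eq, mem_union] at hx ⊢
      exact hx.lt_or_eq
    calc μ {x : E | ⟪v, x⟫ ≤ Qu μ v β}
        ≤ μ ({x : E | ⟪v, x⟫ < Qu μ v β} ∪ {x : E | ⟪v, x⟫ = Qu μ v β}) := measure_mono this
      _ ≤ μ {x : E | ⟪v, x⟫ < Qu μ v β} + μ {x : E | ⟪v, x⟫ = Qu μ v β} := measure_union_le _ _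
      _ = μ {x : E | ⟪v, x⟫ < Qu μ v β} := by rw [hnull]; ring
      _ ≤ ENNReal.ofReal β := hUb
  have := ENNReal.toReal_mono (by simp) hsplit
  rwa [ENNReal.toReal_ofReal hβ0.le] at this

lemma Fc_Qu_eq (v : E) (hnull : ∀ c : ℝ, μ {x : E | ⟪v, x⟫ = c} = 0)
    {β : ℝ} (hβ0 : 0 < β) (hβ1 : β < 1) : Fc μ v (Qu μ v β) = β :=
  le_antisymm (Fc_Qu_le μ v hnull hβ0 hβ1) (le_Fc_of_Qu_le μ v hβ0 hβ1 le_rfl)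

/-- the open halfspace below the β-quantile has measure exactly β -/
lemma measure_lt_Qu (v : E) (hnull : ∀ c : ℝ, μ {x : E | ⟪v, x⟫ = c} = 0)
    {β : ℝ} (hβ0 : 0 < β) (hβ1 : β < 1) :
    μ {x : E | ⟪v, x⟫ < Qu μ v β} = ENNReal.ofReal β := by
  have h1 : μ {x : E | ⟪v, x⟫ ≤ Qu μ v β} = ENNReal.ofReal β := by
    rw [measure_le_eq_ofReal_Fc, Fc_Qu_eq μ v hnull hβ0 hβ1]
  have h2 : μ {x : E | ⟪v, x⟫ ≤ Qu μ v β} = μ {x : E | ⟪v, x⟫ < Qu μ v β} := by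
    have hsub : {x : E | ⟪v, x⟫ ≤ Qu μ v β} ⊆
        {x : E | ⟪v, x⟫ < Qu μ v β} ∪ {x : E | ⟪v, x⟫ = Qu μ v β} := by
      intro x hx
      simp only [mem_setOf_eq, mem_union] at hx ⊢
      exact hx.lt_or_eq
    refine le_antisymm ?_ (measure_mono fun x hx => (le_of_lt (hx : ⟪v, x⟫ < Qu μ v β) : ⟪v, x⟫ ≤ Qu μ v β))
    calc μ {x : E | ⟪v, x⟫ ≤ Qu μ v β}
        ≤ μ ({x : E | ⟪v, x⟫ < Qu μ v β} ∪ {x : E | ⟪v, x⟫ = Qu μ v β}) := measure_mono hsub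
      _ ≤ μ {x : E | ⟪v, x⟫ < Qu μ v β} + μ {x : E | ⟪v, x⟫ = Qu μ v β} := measure_union_le _ _
      _ = μ {x : E | ⟪v, x⟫ < Qu μ v β} := by rw [hnull]; ring
  rw [← h2, h1]

lemma Qu_mono (v : E) {β β' : ℝ} (hβ0 : 0 < β) (hβ'1 : β' < 1) (h : β ≤ β') :
    Qu μ v β ≤ Qu μ v β' := by
  refine csInf_le_csInf (Qu_bddBelow μ v hβ0) (Qu_nonempty μ v hβ'1) ?_
  intro c hc
  exact le_trans h hc

/-! ## The construction -/

section Main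

open scoped Classical

variable {d k : ℕ} (μ : Measure (EuclideanSpace ℝ (Fin d))) [IsProbabilityMeasure μ]

/-- the "cap" (required measure levels) for level `ℓ` in direction `v`, graded by the
sign of the inner product with the reference direction `e`. -/
noncomputable def cap (k : ℕ) (e : EuclideanSpace ℝ (Fin d)) (ℓ : ℕ)
    (v : EuclideanSpace ℝ (Fin d)) : ℝ :=
  if ⟪v, e⟫ < 0 then (ℓ : ℝ) / ((k : ℝ) * d + 1)
  else if 0 < ⟪v, e⟫ then ((k : ℝ) + 1 - ℓ) / ((k : ℝ) * d + 1)
  else max (ℓ : ℝ) ((k : ℝ) + 1 - ℓ) / ((k : ℝ) * d + 1)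

lemma Nr_pos : (0:ℝ) < (k : ℝ) * d + 1 := by positivity

lemma cap_lb {e v : EuclideanSpace ℝ (Fin d)} {ℓ : ℕ} (h1 : 1 ≤ ℓ) (h2 : ℓ ≤ k) :
    1 / ((k : ℝ) * d + 1) ≤ cap k e ℓ v := by
  have hN : (0:ℝ) < (k : ℝ) * d + 1 := Nr_pos
  have hℓ1 : (1:ℝ) ≤ (ℓ:ℝ) := by exact_mod_cast h1
  have hℓk : (ℓ:ℝ) ≤ (k:ℝ) := by exact_mod_cast h2
  unfold cap
  split_ifs with hA hB
  · gcongr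
  · gcongr; linarith
  · gcongr
    exact le_trans hℓ1 (le_max_left _ _)

lemma cap_ub {e v : EuclideanSpace ℝ (Fin d)} {ℓ : ℕ} (h1 : 1 ≤ ℓ) (h2 : ℓ ≤ k) :
    cap k e ℓ v ≤ (k:ℝ) / ((k : ℝ) * d + 1) := by
  have hN : (0:ℝ) < (k : ℝ) * d + 1 := Nr_pos
  have hℓ1 : (1:ℝ) ≤ (ℓ:ℝ) := by exact_mod_cast h1
  have hℓk : (ℓ:ℝ) ≤ (k:ℝ) := by exact_mod_cast h2
  unfold cap
  split_ifs with hA hB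
  · gcongr
  · gcongr; linarith
  · gcongr
    exact max_le hℓk (by linarith)

lemma cap_ge_of_nonpos {e v : EuclideanSpace ℝ (Fin d)} {ℓ : ℕ}
    (hle : ⟪v, e⟫ ≤ 0) : (ℓ:ℝ) / ((k : ℝ) * d + 1) ≤ cap k e ℓ v := by
  have hN : (0:ℝ) < (k : ℝ) * d + 1 := Nr_pos
  rcases lt_or_eq_of_le hle with h | h
  · unfold cap
    rw [if_pos h]
  · unfold cap
    rw [if_neg (by rw [h]; exact lt_irrefl 0), if_neg (by rw [h]; exact lt_irrefl 0)]
    gcongr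
    exact le_max_left _ _

lemma cap_eq_of_pos {e v : EuclideanSpace ℝ (Fin d)} {ℓ : ℕ}
    (hgt : 0 < ⟪v, e⟫) : cap k e ℓ v = ((k:ℝ) + 1 - ℓ) / ((k : ℝ) * d + 1) := by
  unfold cap
  rw [if_neg (not_lt.2 hgt.le), if_pos hgt]

lemma cap_sub_eps_mem {e v : EuclideanSpace ℝ (Fin d)} {ℓ : ℕ} (hd : 0 < d)
    (h1 : 1 ≤ ℓ) (h2 : ℓ ≤ k) {ε : ℝ} (hε0 : 0 < ε)
    (hε1 : ε ≤ 1 / (2 * ((k : ℝ) * d + 1))) :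
    0 < cap k e ℓ v - ε ∧ cap k e ℓ v - ε < 1 := by
  have hN : (0:ℝ) < (k : ℝ) * d + 1 := Nr_pos
  have hc1 := cap_lb (e := e) (v := v) h1 h2
  have hc2 := cap_ub (e := e) (v := v) h1 h2
  have hd1 : (1:ℝ) ≤ (d:ℝ) := by exact_mod_cast hd
  have hk1 : (1:ℝ) ≤ (k:ℝ) := by exact_mod_cast le_trans h1 h2
  constructor
  · have : 1 / (2 * ((k : ℝ) * d + 1)) < 1 / ((k : ℝ) * d + 1) := by
      apply div_lt_div_of_pos_left <;> nlinarith
    linarith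
  · have : (k:ℝ) / ((k : ℝ) * d + 1) < 1 := by
      rw [div_lt_one hN]
      nlinarith
    linarith

/-- the constraint halfspaces -/
noncomputable def Hs (k : ℕ) (e : EuclideanSpace ℝ (Fin d)) (ℓ : ℕ) (ε : ℝ)
    (v : {v : EuclideanSpace ℝ (Fin d) // v ≠ 0}) : Set (EuclideanSpace ℝ (Fin d)) :=
  {x | Qu μ v.1 (cap k e ℓ v.1 - ε) ≤ ⟪v.1, x⟫}

lemma Hs_closed (k : ℕ) (e : EuclideanSpace ℝ (Fin d)) (ℓ : ℕ) (ε : ℝ)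
    (v : {v : EuclideanSpace ℝ (Fin d) // v ≠ 0}) : IsClosed (Hs μ k e ℓ ε v) :=
  isClosed_le continuous_const (cont_inner v.1)

lemma Hs_convex (k : ℕ) (e : EuclideanSpace ℝ (Fin d)) (ℓ : ℕ) (ε : ℝ)
    (v : {v : EuclideanSpace ℝ (Fin d) // v ≠ 0}) : Convex ℝ (Hs μ k e ℓ ε v) := by
  intro x hx y hy a b ha hb hab
  simp only [Hs, mem_setOf_eq] at hx hy ⊢
  have hin : ⟪v.1, a • x + b • y⟫ = a * ⟪v.1, x⟫ + b * ⟪v.1, y⟫ := by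
    rw [inner_add_right, real_inner_smul_right, real_inner_smul_right]
  rw [hin]
  have h1 := mul_le_mul_of_nonneg_left hx ha
  have h2 := mul_le_mul_of_nonneg_left hy hb
  have h3 : a * Qu μ (↑v) (cap k e ℓ ↑v - ε) + b * Qu μ (↑v) (cap k e ℓ ↑v - ε)
      = Qu μ (↑v) (cap k e ℓ ↑v - ε) := by rw [← add_mul, hab, one_mul]
  linarith

/-- If finitely many light open halfspaces cover the space, total mass adds to at least 1. -/
lemma cover_sum_ge_one (J : Finset {v : EuclideanSpace ℝ (Fin d) // v ≠ 0})
    (w : {v : EuclideanSpace ℝ (Fin d) // v ≠ 0} → ℝ) (q : {v : EuclideanSpace ℝ (Fin d) // v ≠ 0} → ℝ)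
    (hw0 : ∀ v ∈ J, 0 ≤ w v)
    (hq : ∀ v ∈ J, μ {x | ⟪v.1, x⟫ < q v} = ENNReal.ofReal (w v))
    (hcov : ∀ x : EuclideanSpace ℝ (Fin d), ∃ v ∈ J, ⟪v.1, x⟫ < q v) :
    (1:ℝ) ≤ ∑ v ∈ J, w v := by
  have h1 : (1:ℝ≥0∞) ≤ ∑ v ∈ J, μ {x | ⟪v.1, x⟫ < q v} := by
    calc (1:ℝ≥0∞) = μ univ := (measure_univ).symm
      _ ≤ μ (⋃ v ∈ J, {x | ⟪v.1, x⟫ < q v}) := by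
          refine measure_mono fun x _ => ?_
          obtain ⟨v, hv, hlt⟩ := hcov x
          exact mem_biUnion hv hlt
      _ ≤ ∑ v ∈ J, μ {x | ⟪v.1, x⟫ < q v} := measure_biUnion_finset_le _ _
  have h2 : ∑ v ∈ J, μ {x | ⟪v.1, x⟫ < q v} = ENNReal.ofReal (∑ v ∈ J, w v) := by
    rw [Finset.sum_congr rfl hq, ← ENNReal.ofReal_sum_of_nonneg hw0]
  rw [h2] at h1
  exact_mod_cast (ENNReal.one_le_ofReal).1 h1

/-- the key counting inequality -/
lemma count_bound {d k ℓ n1 n0 n2 : ℕ} (hd : 1 ≤ d) (h1 : 1 ≤ ℓ) (h2 : ℓ ≤ k)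
    (hn1 : 1 ≤ n1) (hn2 : 1 ≤ n2) (hsum : n1 + n0 + n2 ≤ d + 1) :
    (n1 : ℝ) * ℓ + (n0 : ℝ) * max (ℓ : ℝ) ((k : ℝ) + 1 - ℓ) + (n2 : ℝ) * ((k : ℝ) + 1 - ℓ)
      ≤ (k : ℝ) * d + 1 := by
  have hd' : (1:ℝ) ≤ (d:ℝ) := by exact_mod_cast hd
  have hℓ1 : (1:ℝ) ≤ (ℓ:ℝ) := by exact_mod_cast h1
  have hℓk : (ℓ:ℝ) ≤ (k:ℝ) := by exact_mod_cast h2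
  have hn1' : (1:ℝ) ≤ (n1:ℝ) := by exact_mod_cast hn1
  have hn2' : (1:ℝ) ≤ (n2:ℝ) := by exact_mod_cast hn2
  have hn0' : (0:ℝ) ≤ (n0:ℝ) := by positivity
  have hsum' : (n1:ℝ) + n0 + n2 ≤ (d:ℝ) + 1 := by exact_mod_cast hsum
  rcases le_total ((ℓ:ℝ)) ((k:ℝ) + 1 - ℓ) with h | h
  · rw [max_eq_right h]
    nlinarith [mul_nonneg (sub_nonneg.2 hn1') (sub_nonneg.2 h),
      mul_nonneg (sub_nonneg.2 hd') (sub_nonneg.2 hℓ1),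
      mul_nonneg (by linarith : (0:ℝ) ≤ (d:ℝ) + 1 - (n1 + n0 + n2)) (by linarith : (0:ℝ) ≤ (k:ℝ) + 1 - ℓ)]
  · rw [max_eq_left h]
    nlinarith [mul_nonneg (sub_nonneg.2 hn2') (sub_nonneg.2 h),
      mul_nonneg (sub_nonneg.2 hd') (by linarith : (0:ℝ) ≤ (k:ℝ) - ((k:ℝ) + 1 - ℓ)),
      mul_nonneg (by linarith : (0:ℝ) ≤ (d:ℝ) + 1 - (n1 + n0 + n2)) (by linarith : (0:ℝ) ≤ (ℓ:ℝ))]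

/-- the case where the vertical halfspaces (⟪v,e⟫ = 0) already cover each horizontal
hyperplane leads to a contradiction via Helly in the hyperplane. -/
lemma vertical_case (hd : 0 < d) (hk : 0 < k) (e : EuclideanSpace ℝ (Fin d)) (he : ⟪e, e⟫ = 1)
    (hnull : ∀ v : EuclideanSpace ℝ (Fin d), v ≠ 0 → ∀ c : ℝ, μ {x | ⟪v, x⟫ = c} = 0)
    {ℓ : ℕ} (hℓ1 : 1 ≤ ℓ) (hℓk : ℓ ≤ k) {ε : ℝ} (hε0 : 0 < ε)
    (hε1 : ε ≤ 1 / (2 * ((k : ℝ) * d + 1)))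
    (I : Finset {v : EuclideanSpace ℝ (Fin d) // v ≠ 0})
    (hshadow : ∀ y : EuclideanSpace ℝ (Fin d), ⟪e, y⟫ = 0 →
      ∃ v ∈ I, ⟪v.1, e⟫ = 0 ∧ ⟪v.1, y⟫ < Qu μ v.1 (cap k e ℓ v.1 - ε)) : False := by
  classical
  set N : ℝ := (k : ℝ) * d + 1 with hN
  have hNpos : (0:ℝ) < N := Nr_pos
  set q : {v : EuclideanSpace ℝ (Fin d) // v ≠ 0} → ℝ :=
    fun v => Qu μ v.1 (cap k e ℓ v.1 - ε) with hqdef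
  have hβ : ∀ v : {v : EuclideanSpace ℝ (Fin d) // v ≠ 0},
      0 < cap k e ℓ v.1 - ε ∧ cap k e ℓ v.1 - ε < 1 :=
    fun v => cap_sub_eps_mem hd hℓ1 hℓk hε0 hε1
  set Iv := I.filter (fun v => ⟪v.1, e⟫ = 0) with hIv
  -- the kernel hyperplane
  have hKlt : Module.finrank ℝ (LinearMap.ker (innerSL ℝ e).toLinearMap) < d := by
    have hKne : LinearMap.ker (innerSL ℝ e).toLinearMap ≠ ⊤ := by
      intro hT
      have heK : e ∈ LinearMap.ker (innerSL ℝ e).toLinearMap := by rw [hT]; exact Submodule.mem_top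
      rw [LinearMap.mem_ker, ContinuousLinearMap.coe_coe, innerSL_apply_apply, he] at heK
      norm_num at heK
    calc Module.finrank ℝ (LinearMap.ker (innerSL ℝ e).toLinearMap)
        < Module.finrank ℝ (EuclideanSpace ℝ (Fin d)) := Submodule.finrank_lt hKne
      _ = d := finrank_euclideanSpace_fin
  -- constraint sets in the hyperplane
  set G : {v : EuclideanSpace ℝ (Fin d) // v ≠ 0} → Set (LinearMap.ker (innerSL ℝ e).toLinearMap) :=
    fun v => {y : LinearMap.ker (innerSL ℝ e).toLinearMap |
      q v ≤ ⟪v.1, (y : EuclideanSpace ℝ (Fin d))⟫} with hG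
  have hGconv : ∀ v ∈ Iv, Convex ℝ (G v) := by
    intro v _
    intro x hx y hy a b ha hb hab
    simp only [hG, mem_setOf_eq] at hx hy ⊢
    have hcoe : ((a • x + b • y : LinearMap.ker (innerSL ℝ e).toLinearMap) : EuclideanSpace ℝ (Fin d))
        = a • (x : EuclideanSpace ℝ (Fin d)) + b • (y : EuclideanSpace ℝ (Fin d)) := by
      rfl
    have hin : ⟪v.1, ((a • x + b • y : LinearMap.ker (innerSL ℝ e).toLinearMap) : EuclideanSpace ℝ (Fin d))⟫
        = a * ⟪v.1, (x : EuclideanSpace ℝ (Fin d))⟫ + b * ⟪v.1, (y : EuclideanSpace ℝ (Fin d))⟫ := by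
      rw [hcoe, inner_add_right, real_inner_smul_right, real_inner_smul_right]
    rw [hin]
    have h1 := mul_le_mul_of_nonneg_left hx ha
    have h2 := mul_le_mul_of_nonneg_left hy hb
    have h3 : a * q v + b * q v = q v := by rw [← add_mul, hab, one_mul]
    linarith
  have hGempty : (⋂ v ∈ Iv, G v) = (∅ : Set (LinearMap.ker (innerSL ℝ e).toLinearMap)) := by
    rw [Set.eq_empty_iff_forall_notMem]
    intro y hy
    have hy0 : ⟪e, (y : EuclideanSpace ℝ (Fin d))⟫ = 0 := by
      have h := y.2
      rwa [LinearMap.mem_ker, ContinuousLinearMap.coe_coe, innerSL_apply_apply] at h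
    obtain ⟨v, hvI, hv0, hvlt⟩ := hshadow y.1 hy0
    have hvIv : v ∈ Iv := Finset.mem_filter.2 ⟨hvI, hv0⟩
    have := Set.mem_iInter₂.1 hy v hvIv
    simp only [hG, mem_setOf_eq] at this
    exact absurd this (not_le.2 hvlt)
  -- Helly extraction of at most d vertical constraints with empty intersection
  have hnotall : ¬ ∀ J ⊆ Iv,
      J.card ≤ Module.finrank ℝ (LinearMap.ker (innerSL ℝ e).toLinearMap) + 1 → (⋂ v ∈ J, G v).Nonempty := by
    intro hall
    have := Convex.helly_theorem' (𝕜 := ℝ) (F := G) (s := Iv) hGconv hall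
    rw [hGempty] at this
    exact Set.not_nonempty_empty this
  push_neg at hnotall
  obtain ⟨I₀, hIsub, hIcard, hIemp⟩ := hnotall
  have hI₀d : (I₀.card : ℝ) ≤ (d : ℝ) := by
    have : I₀.card ≤ d := le_trans hIcard (by omega)
    exact_mod_cast this
  -- these at most d vertical opens cover everything
  have hcov0 : ∀ x : EuclideanSpace ℝ (Fin d), ∃ v ∈ I₀, ⟪v.1, x⟫ < q v := by
    intro x
    have hyK : x - ⟪e, x⟫ • e ∈ LinearMap.ker (innerSL ℝ e).toLinearMap := by
      rw [LinearMap.mem_ker, ContinuousLinearMap.coe_coe, innerSL_apply_apply, inner_sub_right, real_inner_smul_right, he]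
      ring
    have hynot : (⟨x - ⟪e, x⟫ • e, hyK⟩ : LinearMap.ker (innerSL ℝ e).toLinearMap) ∉ (⋂ v ∈ I₀, G v) := by
      rw [hIemp]; exact Set.notMem_empty _
    rw [Set.mem_iInter₂] at hynot
    push_neg at hynot
    obtain ⟨v, hvI₀, hvnot⟩ := hynot
    simp only [hG, mem_setOf_eq, not_le] at hvnot
    refine ⟨v, hvI₀, ?_⟩
    have hv0 : ⟪v.1, e⟫ = 0 := (Finset.mem_filter.1 (hIsub hvI₀)).2
    have : ⟪v.1, x⟫ = ⟪v.1, x - ⟪e, x⟫ • e⟫ := by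
      rw [inner_sub_right, real_inner_smul_right, hv0, mul_zero, sub_zero]
    rw [this]
    exact hvnot
  -- measure contradiction
  have hsum : (1:ℝ) ≤ ∑ v ∈ I₀, (cap k e ℓ v.1 - ε) := by
    refine cover_sum_ge_one μ I₀ (fun v => cap k e ℓ v.1 - ε) q
      (fun v _ => (hβ v).1.le) (fun v hv => ?_) hcov0
    exact measure_lt_Qu μ v.1 (hnull v.1 v.2) (hβ v).1 (hβ v).2
  have hub : ∑ v ∈ I₀, (cap k e ℓ v.1 - ε) ≤ I₀.card • ((k : ℝ) / N) := by
    refine Finset.sum_le_card_nsmul _ _ _ fun v _ => ?_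
    have := cap_ub (e := e) (v := v.1) hℓ1 hℓk
    rw [← hN] at this
    linarith
  rw [nsmul_eq_mul] at hub
  have hk1 : (1:ℝ) ≤ (k:ℝ) := Nat.one_le_cast.mpr hk
  have hd1 : (1:ℝ) ≤ (d:ℝ) := Nat.one_le_cast.mpr hd
  have hfin : (I₀.card : ℝ) * ((k : ℝ) / N) < 1 := by
    have h1 : (I₀.card : ℝ) * ((k : ℝ) / N) ≤ (d:ℝ) * ((k : ℝ) / N) := by
      refine mul_le_mul_of_nonneg_right hI₀d (by positivity)
    have h2 : (d:ℝ) * ((k : ℝ) / N) < 1 := by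
      rw [mul_div_assoc', div_lt_one hNpos, hN]
      nlinarith
    linarith
  linarith

/-- Core lemma: any at most `d+1` of the constraint halfspaces have a common point. -/
lemma core_inter_nonempty (hd : 0 < d) (hk : 0 < k) (e : EuclideanSpace ℝ (Fin d))
    (he : ⟪e, e⟫ = 1)
    (hnull : ∀ v : EuclideanSpace ℝ (Fin d), v ≠ 0 → ∀ c : ℝ, μ {x | ⟪v, x⟫ = c} = 0)
    {ℓ : ℕ} (hℓ1 : 1 ≤ ℓ) (hℓk : ℓ ≤ k) {ε : ℝ} (hε0 : 0 < ε)
    (hε1 : ε ≤ 1 / (2 * ((k : ℝ) * d + 1)))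
    (I : Finset {v : EuclideanSpace ℝ (Fin d) // v ≠ 0}) (hI : I.card ≤ d + 1) :
    (⋂ v ∈ I, Hs μ k e ℓ ε v).Nonempty := by
  classical
  by_contra hne
  have hβ : ∀ v : {v : EuclideanSpace ℝ (Fin d) // v ≠ 0},
      0 < cap k e ℓ v.1 - ε ∧ cap k e ℓ v.1 - ε < 1 :=
    fun v => cap_sub_eps_mem hd hℓ1 hℓk hε0 hε1
  have hcov : ∀ x : EuclideanSpace ℝ (Fin d),
      ∃ v ∈ I, ⟪v.1, x⟫ < Qu μ v.1 (cap k e ℓ v.1 - ε) := by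
    intro x
    by_contra hcon
    push_neg at hcon
    exact hne ⟨x, Set.mem_iInter₂.2 fun v hv => hcon v hv⟩
  by_cases hup : ∃ v ∈ I, 0 < ⟪v.1, e⟫
  · by_cases hlow : ∃ v ∈ I, ⟪v.1, e⟫ < 0
    · -- case (a): both signs occur, direct measure counting
      have hsum : (1:ℝ) ≤ ∑ v ∈ I, (cap k e ℓ v.1 - ε) := by
        refine cover_sum_ge_one μ I (fun v => cap k e ℓ v.1 - ε)
          (fun v => Qu μ v.1 (cap k e ℓ v.1 - ε))
          (fun v _ => (hβ v).1.le) (fun v hv => ?_) hcov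
        exact measure_lt_Qu μ v.1 (hnull v.1 v.2) (hβ v).1 (hβ v).2
      -- split the sum of caps
      set P : {v : EuclideanSpace ℝ (Fin d) // v ≠ 0} → Prop := fun v => ⟪v.1, e⟫ < 0 with hP
      set R : {v : EuclideanSpace ℝ (Fin d) // v ≠ 0} → Prop := fun v => 0 < ⟪v.1, e⟫ with hR
      set N : ℝ := (k : ℝ) * d + 1 with hNdef
      have hsplit1 := Finset.sum_filter_add_sum_filter_not I P (fun v => cap k e ℓ v.1)
      have hsplit2 := Finset.sum_filter_add_sum_filter_not (I.filter fun v => ¬ P v) R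
        (fun v => cap k e ℓ v.1)
      have e1 : ∑ v ∈ I.filter P, cap k e ℓ v.1
          = ((I.filter P).card : ℝ) * ((ℓ:ℝ)/N) := by
        rw [Finset.sum_congr rfl (fun v hv => ?_), Finset.sum_const, nsmul_eq_mul]
        have hvP : P v := (Finset.mem_filter.1 hv).2
        show cap k e ℓ v.1 = (ℓ:ℝ)/N
        unfold cap
        rw [if_pos hvP]
      have e2 : ∑ v ∈ (I.filter fun v => ¬ P v).filter R, cap k e ℓ v.1
          = (((I.filter fun v => ¬ P v).filter R).card : ℝ) * (((k:ℝ)+1-ℓ)/N) := by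
        rw [Finset.sum_congr rfl (fun v hv => ?_), Finset.sum_const, nsmul_eq_mul]
        have hv1 : ¬ P v := (Finset.mem_filter.1 ((Finset.mem_filter.1 hv).1)).2
        have hv2 : R v := (Finset.mem_filter.1 hv).2
        show cap k e ℓ v.1 = ((k:ℝ)+1-ℓ)/N
        unfold cap
        rw [if_neg hv1, if_pos hv2]
      have e3 : ∑ v ∈ (I.filter fun v => ¬ P v).filter (fun v => ¬ R v), cap k e ℓ v.1
          = (((I.filter fun v => ¬ P v).filter (fun v => ¬ R v)).card : ℝ)
            * ((max (ℓ:ℝ) ((k:ℝ)+1-ℓ))/N) := by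
        rw [Finset.sum_congr rfl (fun v hv => ?_), Finset.sum_const, nsmul_eq_mul]
        have hv1 : ¬ P v := (Finset.mem_filter.1 ((Finset.mem_filter.1 hv).1)).2
        have hv2 : ¬ R v := (Finset.mem_filter.1 hv).2
        show cap k e ℓ v.1 = (max (ℓ:ℝ) ((k:ℝ)+1-ℓ))/N
        unfold cap
        rw [if_neg hv1, if_neg hv2]
      set n1 := (I.filter P).card with hn1def
      set n2 := ((I.filter fun v => ¬ P v).filter R).card with hn2def
      set n0 := ((I.filter fun v => ¬ P v).filter (fun v => ¬ R v)).card with hn0def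
      have hcard1 : n1 + (I.filter fun v => ¬ P v).card = I.card :=
        Finset.card_filter_add_card_filter_not _
      have hcard2 : n2 + n0 = (I.filter fun v => ¬ P v).card :=
        Finset.card_filter_add_card_filter_not _
      have hn1pos : 1 ≤ n1 := by
        obtain ⟨v, hvI, hvlt⟩ := hlow
        exact Finset.card_pos.2 ⟨v, Finset.mem_filter.2 ⟨hvI, hvlt⟩⟩
      have hn2pos : 1 ≤ n2 := by
        obtain ⟨v, hvI, hvgt⟩ := hup
        have hvnP : ¬ P v := not_lt.2 hvgt.le
        exact Finset.card_pos.2 ⟨v, Finset.mem_filter.2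
          ⟨Finset.mem_filter.2 ⟨hvI, hvnP⟩, hvgt⟩⟩
      have hnsum : n1 + n0 + n2 ≤ d + 1 := by omega
      have hcount := count_bound (d := d) (k := k) hd hℓ1 hℓk hn1pos hn2pos hnsum
      have hNpos : (0:ℝ) < N := Nr_pos
      have hcapsum : ∑ v ∈ I, cap k e ℓ v.1 ≤ 1 := by
        rw [← hsplit1, ← hsplit2, e1, e2, e3]
        have expand : (n1:ℝ) * ((ℓ:ℝ)/N)
              + ((n2:ℝ) * (((k:ℝ)+1-ℓ)/N) + (n0:ℝ) * ((max (ℓ:ℝ) ((k:ℝ)+1-ℓ))/N))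
            = ((n1:ℝ) * ℓ + (n0:ℝ) * (max (ℓ:ℝ) ((k:ℝ)+1-ℓ)) + (n2:ℝ) * ((k:ℝ)+1-ℓ)) / N := by
          ring
        rw [expand, div_le_one hNpos]
        exact hcount
      have hIcard1 : 1 ≤ I.card := by
        obtain ⟨v, hvI, _⟩ := hup
        exact Finset.card_pos.2 ⟨v, hvI⟩
      have hfinal : ∑ v ∈ I, (cap k e ℓ v.1 - ε) < 1 := by
        rw [Finset.sum_sub_distrib, Finset.sum_const, nsmul_eq_mul]
        have : (1:ℝ) ≤ (I.card : ℝ) := by exact_mod_cast hIcard1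
        nlinarith
      linarith
    · -- case (c): all inner products with e are ≥ 0
      push_neg at hlow
      refine vertical_case μ hd hk e he hnull hℓ1 hℓk hε0 hε1 I ?_
      intro y hy
      set s0 : ℝ := 1 + ∑ v ∈ I,
        max 0 ((Qu μ v.1 (cap k e ℓ v.1 - ε) - ⟪v.1, y⟫) / ⟪v.1, e⟫) with hs0
      obtain ⟨v, hvI, hvlt⟩ := hcov (y + s0 • e)
      rw [inner_add_right, real_inner_smul_right] at hvlt
      have hvsign := hlow v hvI
      rcases eq_or_lt_of_le hvsign with heq | hpos
      · refine ⟨v, hvI, heq.symm, ?_⟩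
        rw [← heq] at hvlt
        simpa using hvlt
      · exfalso
        have ht1 : max 0 ((Qu μ v.1 (cap k e ℓ v.1 - ε) - ⟪v.1, y⟫) / ⟪v.1, e⟫)
            ≤ s0 - 1 := by
          rw [hs0]
          have := Finset.single_le_sum
            (f := fun v => max 0 ((Qu μ v.1 (cap k e ℓ v.1 - ε) - ⟪v.1, y⟫) / ⟪v.1, e⟫))
            (fun w _ => le_max_left 0 _) hvI
          linarith
        have ht2 : (Qu μ v.1 (cap k e ℓ v.1 - ε) - ⟪v.1, y⟫) / ⟪v.1, e⟫ ≤ s0 - 1 :=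
          le_trans (le_max_right _ _) ht1
        have ht3 : Qu μ v.1 (cap k e ℓ v.1 - ε) - ⟪v.1, y⟫ ≤ (s0 - 1) * ⟪v.1, e⟫ :=
          (div_le_iff₀ hpos).1 ht2
        nlinarith
  · -- case (b): all inner products with e are ≤ 0
    push_neg at hup
    refine vertical_case μ hd hk e he hnull hℓ1 hℓk hε0 hε1 I ?_
    intro y hy
    set s0 : ℝ := 1 + ∑ v ∈ I,
      max 0 ((Qu μ v.1 (cap k e ℓ v.1 - ε) - ⟪v.1, y⟫) / (-⟪v.1, e⟫)) with hs0
    obtain ⟨v, hvI, hvlt⟩ := hcov (y - s0 • e)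
    rw [inner_sub_right, real_inner_smul_right] at hvlt
    have hvsign := hup v hvI
    rcases eq_or_lt_of_le hvsign with heq | hneg
    · refine ⟨v, hvI, heq, ?_⟩
      rw [heq] at hvlt
      simpa using hvlt
    · exfalso
      have hpos : 0 < -⟪v.1, e⟫ := by linarith
      have ht1 : max 0 ((Qu μ v.1 (cap k e ℓ v.1 - ε) - ⟪v.1, y⟫) / (-⟪v.1, e⟫))
          ≤ s0 - 1 := by
        rw [hs0]
        have := Finset.single_le_sum
          (f := fun v => max 0 ((Qu μ v.1 (cap k e ℓ v.1 - ε) - ⟪v.1, y⟫) / (-⟪v.1, e⟫)))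
          (fun w _ => le_max_left 0 _) hvI
        linarith
      have ht2 : (Qu μ v.1 (cap k e ℓ v.1 - ε) - ⟪v.1, y⟫) / (-⟪v.1, e⟫) ≤ s0 - 1 :=
        le_trans (le_max_right _ _) ht1
      have ht3 : Qu μ v.1 (cap k e ℓ v.1 - ε) - ⟪v.1, y⟫ ≤ (s0 - 1) * (-⟪v.1, e⟫) :=
        (div_le_iff₀ hpos).1 ht2
      nlinarith

lemma single_ne_zero' (i : Fin d) : (EuclideanSpace.single i (1:ℝ)) ≠ 0 := by
  intro h
  have h2 := congrArg (fun w : EuclideanSpace ℝ (Fin d) => w i) h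
  simp [EuclideanSpace.single_apply] at h2

/-- the finite set of axis constraint directions -/
noncomputable def axisA (d : ℕ) : Finset {v : EuclideanSpace ℝ (Fin d) // v ≠ 0} := by
  classical
  exact (Finset.univ.image fun i : Fin d =>
      (⟨EuclideanSpace.single i 1, single_ne_zero' i⟩ : {v : EuclideanSpace ℝ (Fin d) // v ≠ 0}))
    ∪ (Finset.univ.image fun i : Fin d =>
      (⟨-EuclideanSpace.single i 1, neg_ne_zero.2 (single_ne_zero' i)⟩ :
        {v : EuclideanSpace ℝ (Fin d) // v ≠ 0}))

lemma axis_mem_pos (i : Fin d) :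
    (⟨EuclideanSpace.single i 1, single_ne_zero' i⟩ : {v : EuclideanSpace ℝ (Fin d) // v ≠ 0})
      ∈ axisA d := by
  classical
  unfold axisA
  refine Finset.mem_union_left _ (Finset.mem_image.2 ⟨i, Finset.mem_univ i, rfl⟩)

lemma axis_mem_neg (i : Fin d) :
    (⟨-EuclideanSpace.single i 1, neg_ne_zero.2 (single_ne_zero' i)⟩ :
      {v : EuclideanSpace ℝ (Fin d) // v ≠ 0}) ∈ axisA d := by
  classical
  unfold axisA
  refine Finset.mem_union_right _ (Finset.mem_image.2 ⟨i, Finset.mem_univ i, rfl⟩)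

lemma W_compact (k : ℕ) (e : EuclideanSpace ℝ (Fin d)) (ℓ : ℕ) (ε : ℝ) :
    IsCompact (⋂ v ∈ axisA d, Hs μ k e ℓ ε v) := by
  classical
  set Qlo : Fin d → ℝ := fun i =>
    Qu μ (EuclideanSpace.single i 1) (cap k e ℓ (EuclideanSpace.single i 1) - ε) with hQlo
  set Qhi : Fin d → ℝ := fun i =>
    Qu μ (-EuclideanSpace.single i 1) (cap k e ℓ (-EuclideanSpace.single i 1) - ε) with hQhi
  set C : ℝ := ∑ i : Fin d, (|Qlo i| + |Qhi i|) with hC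
  have hCi : ∀ i : Fin d, |Qlo i| ≤ C ∧ |Qhi i| ≤ C := by
    intro i
    have hterm : |Qlo i| + |Qhi i| ≤ C := by
      rw [hC]
      exact Finset.single_le_sum (f := fun i => |Qlo i| + |Qhi i|)
        (fun j _ => by positivity) (Finset.mem_univ i)
    constructor
    · have := abs_nonneg (Qhi i); linarith
    · have := abs_nonneg (Qlo i); linarith
  have hsub : (⋂ v ∈ axisA d, Hs μ k e ℓ ε v) ⊆
      Metric.closedBall 0 (Real.sqrt (d * C^2)) := by
    intro x hx
    have hxi : ∀ i : Fin d, |x i| ≤ C := by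
      intro i
      have h1 := Set.mem_iInter₂.1 hx _ (axis_mem_pos i)
      have h2 := Set.mem_iInter₂.1 hx _ (axis_mem_neg i)
      simp only [Hs, mem_setOf_eq] at h1 h2
      have hi1 : ⟪EuclideanSpace.single i (1:ℝ), x⟫ = x i := by
        rw [EuclideanSpace.inner_single_left]
        simp
      have hi2 : ⟪-EuclideanSpace.single i (1:ℝ), x⟫ = -(x i) := by
        rw [inner_neg_left, hi1]
      rw [hi1] at h1
      rw [hi2] at h2
      rw [abs_le]
      have ha := (hCi i).1
      have hb := (hCi i).2
      rw [abs_le] at ha hb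
      constructor
      · linarith [ha.1]
      · linarith [hb.1]
    rw [Metric.mem_closedBall, dist_zero_right]
    rw [EuclideanSpace.norm_eq]
    have hsum : ∑ i : Fin d, ‖x i‖^2 ≤ (d : ℝ) * C^2 := by
      have hterm : ∀ i : Fin d, ‖x i‖^2 ≤ C^2 := by
        intro i
        rw [Real.norm_eq_abs]
        nlinarith [hxi i, abs_nonneg (x i)]
      calc ∑ i : Fin d, ‖x i‖^2 ≤ ∑ _i : Fin d, C^2 :=
            Finset.sum_le_sum fun i _ => hterm i
        _ = (d:ℝ) * C^2 := by
          rw [Finset.sum_const, nsmul_eq_mul, Finset.card_univ, Fintype.card_fin]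
    exact Real.sqrt_le_sqrt hsum
  refine IsCompact.of_isClosed_subset (isCompact_closedBall 0 _) ?_ hsub
  exact isClosed_biInter fun v _ => Hs_closed μ k e ℓ ε v

/-- nonemptiness of the full constraint set -/
lemma Eset_nonempty (hd : 0 < d) (hk : 0 < k) (e : EuclideanSpace ℝ (Fin d))
    (he : ⟪e, e⟫ = 1)
    (hnull : ∀ v : EuclideanSpace ℝ (Fin d), v ≠ 0 → ∀ c : ℝ, μ {x | ⟪v, x⟫ = c} = 0)
    {ℓ : ℕ} (hℓ1 : 1 ≤ ℓ) (hℓk : ℓ ≤ k) {ε : ℝ} (hε0 : 0 < ε)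
    (hε1 : ε ≤ 1 / (2 * ((k : ℝ) * d + 1))) :
    (⋂ v : {v : EuclideanSpace ℝ (Fin d) // v ≠ 0}, Hs μ k e ℓ ε v).Nonempty := by
  classical
  by_contra hne
  rw [Set.not_nonempty_iff_eq_empty] at hne
  have hWempty : (⋂ v ∈ axisA d, Hs μ k e ℓ ε v) ∩
      (⋂ v : {v : EuclideanSpace ℝ (Fin d) // v ≠ 0}, Hs μ k e ℓ ε v) = ∅ := by
    rw [hne, Set.inter_empty]
  obtain ⟨t, ht⟩ := IsCompact.elim_finite_subfamily_closed (W_compact μ k e ℓ ε)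
    (Hs μ k e ℓ ε) (fun v => Hs_closed μ k e ℓ ε v) hWempty
  -- but by Helly, t ∪ axisA has a common point
  have hHelly : (⋂ v ∈ (t ∪ axisA d), Hs μ k e ℓ ε v).Nonempty := by
    refine Convex.helly_theorem' (𝕜 := ℝ) (F := Hs μ k e ℓ ε) (s := t ∪ axisA d)
      (fun v _ => Hs_convex μ k e ℓ ε v) ?_
    intro J _ hJcard
    refine core_inter_nonempty μ hd hk e he hnull hℓ1 hℓk hε0 hε1 J ?_
    rwa [finrank_euclideanSpace_fin] at hJcard
  obtain ⟨x, hx⟩ := hHelly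
  have hxW : x ∈ ⋂ v ∈ axisA d, Hs μ k e ℓ ε v := by
    refine Set.mem_iInter₂.2 fun v hv => ?_
    exact Set.mem_iInter₂.1 hx v (Finset.mem_union_right _ hv)
  have hxt : x ∈ ⋂ v ∈ t, Hs μ k e ℓ ε v := by
    refine Set.mem_iInter₂.2 fun v hv => ?_
    exact Set.mem_iInter₂.1 hx v (Finset.mem_union_left _ hv)
  have : x ∈ (⋂ v ∈ axisA d, Hs μ k e ℓ ε v) ∩ ⋂ v ∈ t, Hs μ k e ℓ ε v := ⟨hxW, hxt⟩
  rw [ht] at this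
  exact this

/-- the deep point at level ℓ -/
lemma exists_deep_point (hd : 0 < d) (hk : 0 < k) (e : EuclideanSpace ℝ (Fin d))
    (he : ⟪e, e⟫ = 1)
    (hnull : ∀ v : EuclideanSpace ℝ (Fin d), v ≠ 0 → ∀ c : ℝ, μ {x | ⟪v, x⟫ = c} = 0)
    {ℓ : ℕ} (hℓ1 : 1 ≤ ℓ) (hℓk : ℓ ≤ k) :
    ∃ x : EuclideanSpace ℝ (Fin d), ∀ v : EuclideanSpace ℝ (Fin d), v ≠ 0 →
      cap k e ℓ v ≤ Fc μ v ⟪v, x⟫ := by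
  classical
  set N : ℝ := (k : ℝ) * d + 1 with hN
  have hNpos : (0:ℝ) < N := Nr_pos
  set ε : ℕ → ℝ := fun n => (1 / (2*N)) / (n+1) with hε
  have hεpos : ∀ n, 0 < ε n := by
    intro n
    rw [hε]
    positivity
  have hεle : ∀ n, ε n ≤ 1 / (2*N) := by
    intro n
    rw [hε]
    simp only []
    rw [div_le_iff₀ (by positivity : (0:ℝ) < (n:ℝ)+1)]
    have h1 : (1:ℝ) ≤ (n:ℝ)+1 := by
      have : (0:ℝ) ≤ (n:ℝ) := Nat.cast_nonneg n
      linarith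
    nlinarith [one_div_pos.2 (by positivity : (0:ℝ) < 2*N)]
  have hεanti : ∀ n : ℕ, ε (n+1) ≤ ε n := by
    intro n
    rw [hε]
    simp only []
    apply div_le_div_of_nonneg_left (by positivity) (by positivity)
    push_cast
    linarith
  set V : ℕ → Set (EuclideanSpace ℝ (Fin d)) :=
    fun n => ⋂ v : {v : EuclideanSpace ℝ (Fin d) // v ≠ 0}, Hs μ k e ℓ (ε n) v with hV
  have hβ : ∀ (n : ℕ) (v : EuclideanSpace ℝ (Fin d)),
      0 < cap k e ℓ v - ε n ∧ cap k e ℓ v - ε n < 1 :=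
    fun n v => cap_sub_eps_mem hd hℓ1 hℓk (hεpos n) (hεle n)
  have hVanti : ∀ n, V (n+1) ⊆ V n := by
    intro n x hx
    rw [hV, Set.mem_iInter] at hx ⊢
    intro v
    have h1 := hx v
    simp only [Hs, mem_setOf_eq] at h1 ⊢
    refine le_trans ?_ h1
    refine Qu_mono μ v.1 (hβ n v.1).1 (hβ (n+1) v.1).2 ?_
    have := hεanti n
    linarith
  have hVne : ∀ n, (V n).Nonempty :=
    fun n => Eset_nonempty μ hd hk e he hnull hℓ1 hℓk (hεpos n) (hεle n)
  have hVclosed : ∀ n, IsClosed (V n) :=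
    fun n => isClosed_iInter fun v => Hs_closed μ k e ℓ (ε n) v
  have hVcompact : IsCompact (V 0) := by
    refine IsCompact.of_isClosed_subset (W_compact μ k e ℓ (ε 0)) (hVclosed 0) ?_
    intro x hx
    refine Set.mem_iInter₂.2 fun v _ => ?_
    rw [hV, Set.mem_iInter] at hx
    exact hx v
  obtain ⟨x, hx⟩ := IsCompact.nonempty_iInter_of_sequence_nonempty_isCompact_isClosed
    V hVanti hVne hVcompact hVclosed
  refine ⟨x, fun v hv => ?_⟩
  have hxn : ∀ n : ℕ, cap k e ℓ v - ε n ≤ Fc μ v ⟪v, x⟫ := by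
    intro n
    have hxV : x ∈ V n := Set.mem_iInter.1 hx n
    rw [hV, Set.mem_iInter] at hxV
    have := hxV ⟨v, hv⟩
    simp only [Hs, mem_setOf_eq] at this
    exact le_Fc_of_Qu_le μ v (hβ n v).1 (hβ n v).2 this
  refine le_of_forall_pos_le_add fun δ hδ => ?_
  obtain ⟨n, hn⟩ := exists_nat_one_div_lt (by positivity : (0:ℝ) < δ / (1/(2*N)))
  have h2N : (0:ℝ) < 1/(2*N) := by positivity
  have hεn : ε n < δ := by
    have heq : ε n = (1/(2*N)) * (1/((n:ℝ)+1)) := by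
      show (1:ℝ)/(2*N)/((n:ℝ)+1) = (1/(2*N)) * (1/((n:ℝ)+1))
      ring
    calc ε n = (1/(2*N)) * (1/((n:ℝ)+1)) := heq
      _ < (1/(2*N)) * (δ / (1/(2*N))) := by
          exact mul_lt_mul_of_pos_left hn h2N
      _ = δ := by field_simp
  have := hxn n
  linarith

end Main

end GTDepth

/-- For any mass distribution `μ` on `ℝ^d` and any positive integer `k`,
there are `k` points `p₁, …, p_k` whose generalized Tukey depth is at least `1/(kd+1)`:
every closed halfspace containing `m ≥ 1` of the points has `μ`-mass at least `m/(kd+1)`. -/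
theorem generalized_tukey_depth (d k : ℕ) (hk : 0 < k)
    (μ : MeasureTheory.Measure (EuclideanSpace ℝ (Fin d)))
    [MeasureTheory.IsProbabilityMeasure μ]
    (hnull : ∀ (v : EuclideanSpace ℝ (Fin d)) (c : ℝ), v ≠ 0 →
      μ {x | (inner ℝ v x : ℝ) = c} = 0) :
    ∃ p : Fin k → EuclideanSpace ℝ (Fin d),
      ∀ (v : EuclideanSpace ℝ (Fin d)) (c : ℝ), v ≠ 0 →
        1 ≤ (Finset.univ.filter (fun i => (inner ℝ v (p i) : ℝ) ≤ c)).card →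
        ENNReal.ofReal
            (((Finset.univ.filter (fun i => (inner ℝ v (p i) : ℝ) ≤ c)).card : ℝ) /
              (k * d + 1)) ≤
          μ {x | (inner ℝ v x : ℝ) ≤ c} := by
  classical
  open GTDepth in
  rcases Nat.eq_zero_or_pos d with hd0 | hd
  · subst hd0
    haveI : Subsingleton (EuclideanSpace ℝ (Fin 0)) :=
      ⟨fun a b => by ext i; exact i.elim0⟩
    exact ⟨fun _ => 0, fun v c hv _ => absurd (Subsingleton.elim v 0) hv⟩
  · set e : EuclideanSpace ℝ (Fin d) := EuclideanSpace.single (⟨0, hd⟩ : Fin d) (1:ℝ) with he_def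
    have he : (inner ℝ e e : ℝ) = 1 := by
      rw [he_def, EuclideanSpace.inner_single_left]
      simp [EuclideanSpace.single_apply]
    have hnull' : ∀ v : EuclideanSpace ℝ (Fin d), v ≠ 0 → ∀ c : ℝ,
        μ {x | (inner ℝ v x : ℝ) = c} = 0 := fun v hv c => hnull v c hv
    have hpt : ∀ i : Fin k, ∃ x : EuclideanSpace ℝ (Fin d),
        ∀ v : EuclideanSpace ℝ (Fin d), v ≠ 0 →
          GTDepth.cap k e (i.1+1) v ≤ GTDepth.Fc μ v (inner ℝ v x) := by
      intro i
      exact GTDepth.exists_deep_point μ hd hk e he hnull'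
        (by omega) (by have := i.2; omega)
    set p : Fin k → EuclideanSpace ℝ (Fin d) := fun i => (hpt i).choose with hp
    refine ⟨p, fun v c hv hcard => ?_⟩
    set S := Finset.univ.filter (fun i => (inner ℝ v (p i) : ℝ) ≤ c) with hS
    have hSne : S.Nonempty := Finset.card_pos.1 hcard
    set N : ℝ := (k : ℝ) * d + 1 with hN
    have hNpos : (0:ℝ) < N := by positivity
    -- we show (S.card : ℝ) / N ≤ Fc μ v c, then convert
    have key : (S.card : ℝ) / N ≤ GTDepth.Fc μ v c := by
      rcases le_or_gt (inner ℝ v e : ℝ) 0 with hsgn | hsgn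
      · -- lower halfspace: use the maximal level
        set i₀ := S.max' hSne with hi₀
        have hi₀S : i₀ ∈ S := S.max'_mem hSne
        have hcard_le : S.card ≤ i₀.1 + 1 := by
          have hinj : ∀ i ∈ S, ∀ j ∈ S,
              (⟨min i.1 i₀.1, by omega⟩ : Fin (i₀.1+1)) = ⟨min j.1 i₀.1, by omega⟩ → i = j := by
            intro i hi j hj hij
            have h1 : i ≤ i₀ := S.le_max' i hi
            have h2 : j ≤ i₀ := S.le_max' j hj
            have := congrArg Fin.val hij
            simp only at this
            have : i.1 = j.1 := by
              have hi1 : i.1 ≤ i₀.1 := h1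
              have hj1 : j.1 ≤ i₀.1 := h2
              omega
            exact Fin.ext this
          calc S.card ≤ (Finset.univ : Finset (Fin (i₀.1+1))).card :=
                Finset.card_le_card_of_injOn _ (fun _ _ => Finset.mem_univ _) hinj
            _ = i₀.1 + 1 := by simp
        have hm := (hpt i₀).choose_spec v hv
        have hpc : (inner ℝ v (p i₀) : ℝ) ≤ c := (Finset.mem_filter.1 hi₀S).2
        have hcap : ((i₀.1+1 : ℕ) : ℝ) / N ≤ GTDepth.cap k e (i₀.1+1) v := by
          rw [hN]
          exact_mod_cast GTDepth.cap_ge_of_nonpos hsgn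
        have hmono := GTDepth.Fc_mono μ v hpc
        have hfc : ((i₀.1+1 : ℕ) : ℝ) / N ≤ GTDepth.Fc μ v c :=
          le_trans hcap (le_trans hm hmono)
        refine le_trans ?_ hfc
        gcongr
        all_goals exact_mod_cast hcard_le
      · -- upper halfspace: use the minimal level
        set i₀ := S.min' hSne with hi₀
        have hi₀S : i₀ ∈ S := S.min'_mem hSne
        have hi₀k : i₀.1 < k := i₀.2
        have hcard_le : S.card ≤ k - i₀.1 := by
          have hinj : ∀ i ∈ S, ∀ j ∈ S,
              (⟨i.1 - i₀.1, by omega⟩ : Fin (k - i₀.1)) = ⟨j.1 - i₀.1, by omega⟩ → i = j := by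
            intro i hi j hj hij
            have h1 : i₀ ≤ i := S.min'_le i hi
            have h2 : i₀ ≤ j := S.min'_le j hj
            have := congrArg Fin.val hij
            simp only at this
            have hi1 : i₀.1 ≤ i.1 := h1
            have hj1 : i₀.1 ≤ j.1 := h2
            exact Fin.ext (by omega)
          calc S.card ≤ (Finset.univ : Finset (Fin (k - i₀.1))).card :=
                Finset.card_le_card_of_injOn _ (fun _ _ => Finset.mem_univ _) hinj
            _ = k - i₀.1 := by simp
        have hm := (hpt i₀).choose_spec v hv
        have hpc : (inner ℝ v (p i₀) : ℝ) ≤ c := (Finset.mem_filter.1 hi₀S).2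
        have hcap : ((k - i₀.1 : ℕ) : ℝ) / N ≤ GTDepth.cap k e (i₀.1+1) v := by
          rw [hN, GTDepth.cap_eq_of_pos hsgn]
          have hcast : ((k - i₀.1 : ℕ) : ℝ) = (k:ℝ) + 1 - ((i₀.1+1 : ℕ) : ℝ) := by
            push_cast [Nat.cast_sub hi₀k.le]
            ring
          rw [hcast]
        have hmono := GTDepth.Fc_mono μ v hpc
        have hfc : ((k - i₀.1 : ℕ) : ℝ) / N ≤ GTDepth.Fc μ v c :=
          le_trans hcap (le_trans hm hmono)
        refine le_trans ?_ hfc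
        gcongr
        all_goals exact_mod_cast hcard_le
    rw [GTDepth.measure_le_eq_ofReal_Fc μ v c]
    refine ENNReal.ofReal_le_ofReal ?_
    exact key
end

section
/- Let P be a set of n points in ℝ^d. Let α₁, …, α_k be non-negative real numbers such that α₁ ≤ α₂ ≤ … ≤ α_k and for every i, j with i + j ≤ k + 1 we have (d−1)·α_k + α_i + α_j ≤ 1. Then there exist k points p₁, …, p_k in ℝ^d such that for every j with 1 ≤ j ≤ k, every closed halfspace that contains at least j of the points p₁, …, p_k contains at least α_j·n of the points of P. -/
open Finset Module

section Aux

variable {d : ℕ}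

/-- The set of points `p` such that the halfspace `{x : ⟪v,x⟫ ≤ ⟪v,p⟫}` contains at
least `m` points of `P`. -/
def Kset (P : Finset (EuclideanSpace ℝ (Fin d))) (v : EuclideanSpace ℝ (Fin d)) (m : ℕ) :
    Set (EuclideanSpace ℝ (Fin d)) :=
  {p | m ≤ (P.filter fun y => (inner ℝ v y : ℝ) ≤ (inner ℝ v p : ℝ)).card}

lemma kset_halfspace (P : Finset (EuclideanSpace ℝ (Fin d))) (v : EuclideanSpace ℝ (Fin d))
    {m : ℕ} (h1 : 1 ≤ m) (hn : m ≤ P.card) :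
    ∃ t : ℝ, Kset P v m = {p | t ≤ (inner ℝ v p : ℝ)} := by
  classical
  set f : EuclideanSpace ℝ (Fin d) → ℝ := fun y => (inner ℝ v y : ℝ) with hf
  have hPne : P.Nonempty := card_pos.mp (lt_of_lt_of_le h1 hn)
  set T := P.filter fun x => m ≤ (P.filter fun y => f y ≤ f x).card with hT
  have hTne : T.Nonempty := by
    obtain ⟨x₀, hx₀P, hx₀⟩ := P.exists_max_image f hPne
    refine ⟨x₀, mem_filter.mpr ⟨hx₀P, ?_⟩⟩
    have : P.filter (fun y => f y ≤ f x₀) = P := filter_true_of_mem fun y hy => hx₀ y hy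
    rw [this]; exact hn
  obtain ⟨xs, hxsT, hxs⟩ := T.exists_min_image f hTne
  refine ⟨f xs, ?_⟩
  ext p
  simp only [Kset, Set.mem_setOf_eq]
  constructor
  · intro hp
    set S := P.filter fun y => f y ≤ f p with hS
    have hSne : S.Nonempty := card_pos.mp (lt_of_lt_of_le h1 hp)
    obtain ⟨x₁, hx₁S, hx₁⟩ := S.exists_max_image f hSne
    have hx₁T : x₁ ∈ T := by
      refine mem_filter.mpr ⟨(mem_filter.mp hx₁S).1, ?_⟩
      refine le_trans hp (card_le_card ?_)
      intro y hy
      exact mem_filter.mpr ⟨(mem_filter.mp hy).1, hx₁ y hy⟩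
    exact le_trans (hxs x₁ hx₁T) (mem_filter.mp hx₁S).2
  · intro hp
    have hxsmem := (mem_filter.mp hxsT).2
    refine le_trans hxsmem (card_le_card ?_)
    intro y hy
    exact mem_filter.mpr ⟨(mem_filter.mp hy).1, le_trans (mem_filter.mp hy).2 hp⟩

lemma kset_convex (P : Finset (EuclideanSpace ℝ (Fin d))) (v : EuclideanSpace ℝ (Fin d))
    (m : ℕ) : Convex ℝ (Kset P v m) ∧ IsClosed (Kset P v m) := by
  classical
  rcases Nat.eq_zero_or_pos m with hm | hm
  · have : Kset P v m = Set.univ := by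
      ext p; simp [Kset, hm]
    rw [this]; exact ⟨convex_univ, isClosed_univ⟩
  rcases le_or_gt m P.card with hn | hn
  · obtain ⟨t, ht⟩ := kset_halfspace P v hm hn
    rw [ht]
    have hlin : IsLinearMap ℝ (fun p : EuclideanSpace ℝ (Fin d) => (inner ℝ v p : ℝ)) :=
      ⟨fun a b => inner_add_right v a b, fun c x => real_inner_smul_right v x c⟩
    constructor
    · exact convex_halfSpace_ge hlin t
    · exact isClosed_le continuous_const (Continuous.inner continuous_const continuous_id)
  · have : Kset P v m = ∅ := by
      ext p
      simp only [Kset, Set.mem_setOf_eq, Set.mem_empty_iff_false, iff_false, not_le]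
      exact lt_of_le_of_lt (card_le_card (filter_subset _ _)) hn
    rw [this]; exact ⟨convex_empty, isClosed_empty⟩

lemma card_notin_kset (P : Finset (EuclideanSpace ℝ (Fin d))) (v : EuclideanSpace ℝ (Fin d))
    {m : ℕ} (h1 : 1 ≤ m) :
    (P.filter fun x => (P.filter fun y => (inner ℝ v y : ℝ) ≤ (inner ℝ v x : ℝ)).card < m).card
      ≤ m - 1 := by
  classical
  by_contra h
  push_neg at h
  set f : EuclideanSpace ℝ (Fin d) → ℝ := fun y => (inner ℝ v y : ℝ) with hf
  set S := P.filter fun x => (P.filter fun y => f y ≤ f x).card < m with hS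
  have hcard : m ≤ S.card := by omega
  have hSne : S.Nonempty := card_pos.mp (lt_of_lt_of_le h1 hcard)
  obtain ⟨xs, hxsS, hxs⟩ := S.exists_max_image f hSne
  have : m ≤ (P.filter fun y => f y ≤ f xs).card := by
    refine le_trans hcard (card_le_card ?_)
    intro y hy
    exact mem_filter.mpr ⟨(mem_filter.mp hy).1, hxs y hy⟩
  exact absurd this (not_le.mpr (mem_filter.mp hxsS).2)

/-- Counting contradiction: `P` cannot be covered by "bad" halfspaces with total weight ≤ 1. -/
lemma count_contra {ι : Type*} (P : Finset (EuclideanSpace ℝ (Fin d)))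
    (S : Finset ι) (v : ι → EuclideanSpace ℝ (Fin d)) (τ : ι → ℝ)
    (hτ0 : ∀ i ∈ S, 0 ≤ τ i) (hsum1 : ∑ i ∈ S, τ i ≤ 1) (hn : 1 ≤ P.card)
    (hcover : ∀ x ∈ P, ∃ i ∈ S,
      (P.filter fun y => (inner ℝ (v i) y : ℝ) ≤ (inner ℝ (v i) x : ℝ)).card < ⌈τ i * P.card⌉₊) :
    False := by
  classical
  set n := P.card with hn'
  set g : ι → Finset (EuclideanSpace ℝ (Fin d)) := fun i =>
    P.filter fun x => (P.filter fun y => (inner ℝ (v i) y : ℝ) ≤ (inner ℝ (v i) x : ℝ)).card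
      < ⌈τ i * n⌉₊ with hg
  have hsub : P ⊆ S.biUnion g := by
    intro x hx
    obtain ⟨i, hiS, hi⟩ := hcover x hx
    exact mem_biUnion.mpr ⟨i, hiS, mem_filter.mpr ⟨hx, hi⟩⟩
  have hcard : n ≤ ∑ i ∈ S, (g i).card :=
    le_trans (card_le_card hsub) (card_biUnion_le)
  -- there is an index with positive ceiling
  have hex : ∃ i₀ ∈ S, 1 ≤ ⌈τ i₀ * n⌉₊ := by
    by_contra hall
    push_neg at hall
    have : ∀ i ∈ S, g i = ∅ := by
      intro i hi
      have h0 : ⌈τ i * n⌉₊ = 0 := by have := hall i hi; omega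
      ext x; simp [hg, h0]
    have : ∑ i ∈ S, (g i).card = 0 := Finset.sum_eq_zero fun i hi => by rw [this i hi]; simp
    omega
  obtain ⟨i₀, hi₀S, hi₀⟩ := hex
  -- real-valued estimate
  have hreal : (n : ℝ) ≤ ∑ i ∈ S, ((g i).card : ℝ) := by
    rw [← Nat.cast_sum]; exact_mod_cast hcard
  have hlt : ∑ i ∈ S, ((g i).card : ℝ) < ∑ i ∈ S, τ i * n := by
    refine Finset.sum_lt_sum (fun i hi => ?_) ⟨i₀, hi₀S, ?_⟩
    · rcases Nat.eq_zero_or_pos ⌈τ i * n⌉₊ with h0 | h1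
      · have : g i = ∅ := by ext x; simp [hg, h0]
        rw [this]
        simpa using mul_nonneg (hτ0 i hi) (Nat.cast_nonneg n)
      · have hb := card_notin_kset P (v i) h1
        have hc : ((g i).card : ℝ) ≤ (⌈τ i * n⌉₊ : ℝ) - 1 := by
          have : (g i).card ≤ ⌈τ i * n⌉₊ - 1 := hb
          have := Nat.cast_le (α := ℝ).mpr this
          rw [Nat.cast_sub h1] at this
          simpa using this
        have hceil : (⌈τ i * n⌉₊ : ℝ) < τ i * n + 1 :=
          Nat.ceil_lt_add_one (mul_nonneg (hτ0 i hi) (Nat.cast_nonneg n))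
        linarith
    · have hb := card_notin_kset P (v i₀) hi₀
      have hc : ((g i₀).card : ℝ) ≤ (⌈τ i₀ * n⌉₊ : ℝ) - 1 := by
        have : (g i₀).card ≤ ⌈τ i₀ * n⌉₊ - 1 := hb
        have := Nat.cast_le (α := ℝ).mpr this
        rw [Nat.cast_sub hi₀] at this
        simpa using this
      have hceil : (⌈τ i₀ * n⌉₊ : ℝ) < τ i₀ * n + 1 :=
        Nat.ceil_lt_add_one (mul_nonneg (hτ0 i₀ hi₀S) (Nat.cast_nonneg n))
      linarith
  have hfin : ∑ i ∈ S, τ i * (n : ℝ) ≤ n := by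
    rw [← Finset.sum_mul]
    have hn0 : (0:ℝ) ≤ n := Nat.cast_nonneg n
    nlinarith
  have : (1:ℝ) ≤ n := by exact_mod_cast hn
  linarith

/-- One-sided case: constraints whose normals all have nonnegative inner product with `u`
always have a common point. -/
lemma one_sided (hd : 1 ≤ d) (P : Finset (EuclideanSpace ℝ (Fin d))) (hn : 1 ≤ P.card)
    (u : EuclideanSpace ℝ (Fin d)) (hu : ‖u‖ = 1)
    (τ : ℝ) (h0 : 0 ≤ τ) (hdτ : (d : ℝ) * τ ≤ 1)
    (V : Finset (EuclideanSpace ℝ (Fin d)))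
    (hVs : ∀ v ∈ V, 0 ≤ (inner ℝ v u : ℝ)) :
    (⋂ v ∈ V, Kset P v ⌈τ * P.card⌉₊).Nonempty := by
  classical
  by_contra hemp
  rw [Set.not_nonempty_iff_eq_empty] at hemp
  set n := P.card with hn'
  set m := ⌈τ * (n : ℝ)⌉₊ with hm
  have hτ1 : τ ≤ 1 := by
    have : (1 : ℝ) ≤ d := by exact_mod_cast hd
    nlinarith
  have hmn : m ≤ n := Nat.ceil_le.mpr (by nlinarith [Nat.cast_nonneg (α := ℝ) n])
  have hPne : P.Nonempty := card_pos.mp hn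
  have hu0 : u ≠ 0 := fun h => by simp [h] at hu
  -- basic cover from emptiness
  have hcov : ∀ x : EuclideanSpace ℝ (Fin d), ∃ v ∈ V, x ∉ Kset P v m := by
    intro x
    by_contra hc
    push_neg at hc
    have : x ∈ ⋂ v ∈ V, Kset P v m := Set.mem_iInter₂.mpr hc
    rw [hemp] at this
    exact this
  -- Step 1: cover by perpendicular constraints only
  have hZcov : ∀ x : EuclideanSpace ℝ (Fin d),
      ∃ v ∈ V, (inner ℝ v u : ℝ) = 0 ∧ x ∉ Kset P v m := by
    intro x
    set M : EuclideanSpace ℝ (Fin d) → ℝ := fun v => P.sup' hPne (fun y => (inner ℝ v y : ℝ))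
      with hM
    set s : ℝ := 1 + ∑ v ∈ V, max 0 ((M v - (inner ℝ v x : ℝ)) / (inner ℝ v u : ℝ)) with hs
    have hsect : ∀ v ∈ V, 0 < (inner ℝ v u : ℝ) →
        M v ≤ (inner ℝ v x : ℝ) + s * (inner ℝ v u : ℝ) := by
      intro v hv hpos
      have h1 : max 0 ((M v - (inner ℝ v x : ℝ)) / (inner ℝ v u : ℝ))
          ≤ ∑ w ∈ V, max 0 ((M w - (inner ℝ w x : ℝ)) / (inner ℝ w u : ℝ)) :=
        Finset.single_le_sum (f := fun w => max 0 ((M w - (inner ℝ w x : ℝ)) / (inner ℝ w u : ℝ)))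
          (fun w _ => le_max_left _ _) hv
      have h2 : (M v - (inner ℝ v x : ℝ)) / (inner ℝ v u : ℝ) ≤ s := by
        have := le_max_right 0 ((M v - (inner ℝ v x : ℝ)) / (inner ℝ v u : ℝ))
        simp only [hs]; linarith
      have := (div_le_iff₀ hpos).mp h2
      linarith
    obtain ⟨v, hvV, hvnot⟩ := hcov (x + s • u)
    have hinner : (inner ℝ v (x + s • u) : ℝ) = (inner ℝ v x : ℝ) + s * (inner ℝ v u : ℝ) := by
      rw [inner_add_right, real_inner_smul_right]
    rcases lt_or_eq_of_le (hVs v hvV) with hpos | hzero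
    · exfalso
      apply hvnot
      simp only [Kset, Set.mem_setOf_eq]
      have hfull : P.filter (fun y => (inner ℝ v y : ℝ) ≤ (inner ℝ v (x + s • u) : ℝ)) = P := by
        apply filter_true_of_mem
        intro y hy
        rw [hinner]
        exact le_trans (Finset.le_sup' (fun y => (inner ℝ v y : ℝ)) hy) (hsect v hvV hpos)
      rw [hfull]
      exact hmn
    · refine ⟨v, hvV, hzero.symm, ?_⟩
      intro hx
      apply hvnot
      simp only [Kset, Set.mem_setOf_eq] at hx ⊢
      rw [hinner, ← hzero]
      simpa using hx
  -- the orthogonal complement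
  set W := (Submodule.span ℝ {u})ᗮ with hW
  have hfinW : finrank ℝ W = d - 1 := by
    have h1 : finrank ℝ (Submodule.span ℝ {u}) = 1 := finrank_span_singleton hu0
    have h2 : finrank ℝ (Submodule.span ℝ {u}) + finrank ℝ W
        = finrank ℝ (EuclideanSpace ℝ (Fin d)) :=
      Submodule.finrank_add_finrank_orthogonal (K := Submodule.span ℝ {u})
    rw [h1, finrank_euclideanSpace_fin] at h2
    omega
  set Z := V.filter (fun v => (inner ℝ v u : ℝ) = 0) with hZ
  -- Step 2: small subfamilies of perpendicular constraints intersect inside W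
  have hstep2 : ∀ I ⊆ Z, I.card ≤ finrank ℝ W + 1 →
      (⋂ v ∈ I, ((↑) : W → EuclideanSpace ℝ (Fin d)) ⁻¹' Kset P v m).Nonempty := by
    intro I hIZ hIcard
    by_contra hI0
    rw [Set.not_nonempty_iff_eq_empty] at hI0
    have hIcov : ∀ q : W, ∃ v ∈ I, (q : EuclideanSpace ℝ (Fin d)) ∉ Kset P v m := by
      intro q
      by_contra hc
      push_neg at hc
      have : q ∈ ⋂ v ∈ I, ((↑) : W → EuclideanSpace ℝ (Fin d)) ⁻¹' Kset P v m :=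
        Set.mem_iInter₂.mpr hc
      rw [hI0] at this
      exact this
    refine count_contra P I id (fun _ => τ) (fun _ _ => h0) ?_ hn ?_
    · have : ∑ _i ∈ I, τ = I.card • τ := (Finset.sum_const τ).symm ▸ rfl
      rw [Finset.sum_const, nsmul_eq_mul]
      have hIc : (I.card : ℝ) ≤ d := by
        have : I.card ≤ d := by rw [hfinW] at hIcard; omega
        exact_mod_cast this
      nlinarith
    · intro x hx
      -- project x into W
      set q : EuclideanSpace ℝ (Fin d) := x - (inner ℝ u x : ℝ) • u with hq
      have hqW : q ∈ W := by
        rw [hW, Submodule.mem_orthogonal_singleton_iff_inner_right]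
        rw [hq, inner_sub_right, real_inner_smul_right, real_inner_self_eq_norm_sq, hu]
        ring
      obtain ⟨v, hvI, hvnot⟩ := hIcov ⟨q, hqW⟩
      have hvZ : (inner ℝ v u : ℝ) = 0 := (mem_filter.mp (hIZ hvI)).2
      have hinner : (inner ℝ v q : ℝ) = (inner ℝ v x : ℝ) := by
        rw [hq, inner_sub_right, real_inner_smul_right, hvZ]
        ring
      have hnot : ¬ (m ≤ (P.filter fun y => (inner ℝ v y : ℝ) ≤ (inner ℝ v x : ℝ)).card) := by
        intro hle
        apply hvnot
        simp only [Kset, Set.mem_setOf_eq]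
        calc m ≤ (P.filter fun y => (inner ℝ v y : ℝ) ≤ (inner ℝ v x : ℝ)).card := hle
        _ ≤ _ := by rw [hinner]
      refine ⟨v, hvI, ?_⟩
      show (P.filter fun y => (inner ℝ v y : ℝ) ≤ (inner ℝ v x : ℝ)).card < m
      exact Nat.not_le.mp hnot
  -- Step 3: Helly inside W
  have hconv : ∀ v ∈ Z,
      Convex ℝ (((↑) : W → EuclideanSpace ℝ (Fin d)) ⁻¹' Kset P v m) := fun v _ =>
    (kset_convex P v m).1.linear_preimage W.subtype
  obtain ⟨q, hq⟩ := Convex.helly_theorem' (𝕜 := ℝ)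
    (F := fun v => ((↑) : W → EuclideanSpace ℝ (Fin d)) ⁻¹' Kset P v m) (s := Z) hconv hstep2
  obtain ⟨v, hvV, hvz, hvnot⟩ := hZcov (q : EuclideanSpace ℝ (Fin d))
  have hvZ : v ∈ Z := mem_filter.mpr ⟨hvV, hvz⟩
  exact hvnot (Set.mem_iInter₂.mp hq v hvZ)

lemma exists_deep_point_s10 (hd : 1 ≤ d) (P : Finset (EuclideanSpace ℝ (Fin d)))
    (hn : 1 ≤ P.card) (u : EuclideanSpace ℝ (Fin d)) (hu : ‖u‖ = 1) (τa τb K : ℝ)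
    (h0a : 0 ≤ τa) (h0b : 0 ≤ τb) (haK : τa ≤ K) (hbK : τb ≤ K)
    (hdK : (d : ℝ) * K ≤ 1) (hsum : ((d : ℝ) - 1) * K + τa + τb ≤ 1) :
    ∃ p : EuclideanSpace ℝ (Fin d),
      (∀ v : EuclideanSpace ℝ (Fin d), 0 ≤ (inner ℝ v u : ℝ) →
        p ∈ Kset P v ⌈τa * P.card⌉₊) ∧
      (∀ v : EuclideanSpace ℝ (Fin d), (inner ℝ v u : ℝ) ≤ 0 →
        p ∈ Kset P v ⌈τb * P.card⌉₊) := by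
  classical
  have hK0 : 0 ≤ K := le_trans h0a haK
  have hd1 : (1 : ℝ) ≤ (d : ℝ) := by exact_mod_cast hd
  have hdτa : (d : ℝ) * τa ≤ 1 := le_trans (by nlinarith) hdK
  have hdτb : (d : ℝ) * τb ≤ 1 := le_trans (by nlinarith) hdK
  set F : EuclideanSpace ℝ (Fin d) × Bool → Set (EuclideanSpace ℝ (Fin d)) := fun w =>
    match w with
    | (v, true) => if 0 ≤ (inner ℝ v u : ℝ) then Kset P v ⌈τa * P.card⌉₊ else Set.univ
    | (v, false) => if (inner ℝ v u : ℝ) ≤ 0 then Kset P v ⌈τb * P.card⌉₊ else Set.univ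
    with hF
  have hFt : ∀ v, 0 ≤ (inner ℝ v u : ℝ) → F (v, true) = Kset P v ⌈τa * P.card⌉₊ := by
    intro v h; exact if_pos h
  have hFt' : ∀ v, ¬ 0 ≤ (inner ℝ v u : ℝ) → F (v, true) = Set.univ := by
    intro v h; exact if_neg h
  have hFf : ∀ v, (inner ℝ v u : ℝ) ≤ 0 → F (v, false) = Kset P v ⌈τb * P.card⌉₊ := by
    intro v h; exact if_pos h
  have hFf' : ∀ v, ¬ (inner ℝ v u : ℝ) ≤ 0 → F (v, false) = Set.univ := by
    intro v h; exact if_neg h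
  have hFconv : ∀ w, Convex ℝ (F w) := by
    rintro ⟨v, b⟩
    cases b
    · by_cases h : (inner ℝ v u : ℝ) ≤ 0
      · rw [hFf v h]; exact (kset_convex P v _).1
      · rw [hFf' v h]; exact convex_univ
    · by_cases h : 0 ≤ (inner ℝ v u : ℝ)
      · rw [hFt v h]; exact (kset_convex P v _).1
      · rw [hFt' v h]; exact convex_univ
  have hFclosed : ∀ w, IsClosed (F w) := by
    rintro ⟨v, b⟩
    cases b
    · by_cases h : (inner ℝ v u : ℝ) ≤ 0
      · rw [hFf v h]; exact (kset_convex P v _).2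
      · rw [hFf' v h]; exact isClosed_univ
    · by_cases h : 0 ≤ (inner ℝ v u : ℝ)
      · rw [hFt v h]; exact (kset_convex P v _).2
      · rw [hFt' v h]; exact isClosed_univ
  have hτfun : ∀ w : EuclideanSpace ℝ (Fin d) × Bool,
      0 ≤ (fun w : EuclideanSpace ℝ (Fin d) × Bool => bif w.2 then τa else τb) w
      ∧ (fun w : EuclideanSpace ℝ (Fin d) × Bool => bif w.2 then τa else τb) w ≤ K := by
    rintro ⟨v, b⟩; cases b <;> simp [h0a, h0b, haK, hbK]
  -- a "bad" witness gives a strict counting bound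
  have hbad : ∀ (J : Finset (EuclideanSpace ℝ (Fin d) × Bool))
      (x : EuclideanSpace ℝ (Fin d)), (∃ w ∈ J, x ∉ F w) →
      ∃ w ∈ J, (P.filter fun y => (inner ℝ w.1 y : ℝ) ≤ (inner ℝ w.1 x : ℝ)).card
        < ⌈(bif w.2 then τa else τb) * P.card⌉₊ := by
    rintro J x ⟨w, hwJ, hwnot⟩
    refine ⟨w, hwJ, ?_⟩
    rcases w with ⟨v, b⟩
    cases b
    · show (P.filter fun y => (inner ℝ v y : ℝ) ≤ (inner ℝ v x : ℝ)).card < ⌈τb * P.card⌉₊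
      by_cases hsgn : (inner ℝ v u : ℝ) ≤ 0
      · rw [hFf v hsgn] at hwnot
        simp only [Kset, Set.mem_setOf_eq, not_le] at hwnot
        exact hwnot
      · exact absurd (hFf' v hsgn ▸ Set.mem_univ x) hwnot
    · show (P.filter fun y => (inner ℝ v y : ℝ) ≤ (inner ℝ v x : ℝ)).card < ⌈τa * P.card⌉₊
      by_cases hsgn : 0 ≤ (inner ℝ v u : ℝ)
      · rw [hFt v hsgn] at hwnot
        simp only [Kset, Set.mem_setOf_eq, not_le] at hwnot
        exact hwnot
      · exact absurd (hFt' v hsgn ▸ Set.mem_univ x) hwnot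
  -- every finite subfamily together with the convex hull has a common point
  have key : ∀ t : Finset (EuclideanSpace ℝ (Fin d) × Bool),
      ((convexHull ℝ (↑P : Set (EuclideanSpace ℝ (Fin d)))) ∩ ⋂ w ∈ t, F w).Nonempty := by
    intro t
    set G : Option (EuclideanSpace ℝ (Fin d) × Bool) → Set (EuclideanSpace ℝ (Fin d)) :=
      fun o => o.elim (convexHull ℝ (↑P : Set (EuclideanSpace ℝ (Fin d)))) F with hG
    have hmain : (⋂ o ∈ insert none (t.image some), G o).Nonempty := by
      apply Convex.helly_theorem' (𝕜 := ℝ)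
      · intro o _
        rcases o with _ | w
        · exact convex_convexHull ℝ _
        · exact hFconv w
      · intro I hIs hIcard
        rw [finrank_euclideanSpace_fin] at hIcard
        set J : Finset (EuclideanSpace ℝ (Fin d) × Bool) :=
          t.filter (fun w => some w ∈ I) with hJ
        have hIJ : ∀ o ∈ I, o = none ∨ ∃ w ∈ J, o = some w := by
          intro o ho
          rcases mem_insert.mp (hIs ho) with h | h
          · exact Or.inl h
          · obtain ⟨w, hwt, hw⟩ := mem_image.mp h
            exact Or.inr ⟨w, mem_filter.mpr ⟨hwt, hw ▸ ho⟩, hw.symm⟩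
        by_cases hnone : none ∈ I
        · -- at most d proper constraints, plus the hull
          have hJd : J.card ≤ d := by
            have h1 : J.image some ⊆ I.erase none := by
              intro o ho
              obtain ⟨w, hwJ, hw⟩ := mem_image.mp ho
              refine mem_erase.mpr ⟨hw ▸ (by simp), hw ▸ (mem_filter.mp hwJ).2⟩
            have h2 := card_le_card h1
            rw [card_image_of_injective _ (Option.some_injective _),
              card_erase_of_mem hnone] at h2
            omega
          have hcl : ((convexHull ℝ (↑P : Set (EuclideanSpace ℝ (Fin d))))
              ∩ ⋂ w ∈ J, F w).Nonempty := by
            by_contra hc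
            rw [Set.not_nonempty_iff_eq_empty] at hc
            refine count_contra P J (fun w => w.1) (fun w => bif w.2 then τa else τb)
              (fun w _ => (hτfun w).1) ?_ hn ?_
            · calc ∑ w ∈ J, (bif w.2 then τa else τb)
                  ≤ ∑ _w ∈ J, K := Finset.sum_le_sum fun w _ => (hτfun w).2
                _ = J.card * K := by rw [Finset.sum_const, nsmul_eq_mul]
                _ ≤ (d : ℝ) * K := by
                    apply mul_le_mul_of_nonneg_right _ hK0
                    exact_mod_cast hJd
                _ ≤ 1 := hdK
            · intro x hx
              have hxh : x ∈ convexHull ℝ (↑P : Set (EuclideanSpace ℝ (Fin d))) :=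
                subset_convexHull ℝ _ (Finset.mem_coe.mpr hx)
              refine hbad J x ?_
              by_contra hall
              push_neg at hall
              have : x ∈ (convexHull ℝ (↑P : Set (EuclideanSpace ℝ (Fin d))))
                  ∩ ⋂ w ∈ J, F w := ⟨hxh, Set.mem_iInter₂.mpr hall⟩
              rw [hc] at this
              exact this
          obtain ⟨p, hp1, hp2⟩ := hcl
          refine ⟨p, Set.mem_iInter₂.mpr ?_⟩
          intro o ho
          rcases hIJ o ho with h | ⟨w, hwJ, hw⟩
          · rw [h]; exact hp1
          · rw [hw]; exact Set.mem_iInter₂.mp hp2 w hwJ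
        · -- no hull constraint: up to d+1 halfspace constraints
          have hJd : J.card ≤ d + 1 := by
            have h1 : J.image some ⊆ I := fun o ho => by
              obtain ⟨w, hwJ, hw⟩ := mem_image.mp ho
              exact hw ▸ (mem_filter.mp hwJ).2
            have h2 := card_le_card h1
            rw [card_image_of_injective _ (Option.some_injective _)] at h2
            omega
          have hcl : (⋂ w ∈ J, F w).Nonempty := by
            by_cases hex1 : ∃ w ∈ J, w.2 = true
            · by_cases hex2 : ∃ w ∈ J, w.2 = false
              · -- mixed: counting argument
                by_contra hc
                rw [Set.not_nonempty_iff_eq_empty] at hc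
                refine count_contra P J (fun w => w.1) (fun w => bif w.2 then τa else τb)
                  (fun w _ => (hτfun w).1) ?_ hn ?_
                · -- sum bound in the mixed case
                  obtain ⟨w1, hw1J, hw1⟩ := hex1
                  obtain ⟨w2, hw2J, hw2⟩ := hex2
                  have hsplit : ∑ w ∈ J, (bif w.2 then τa else τb)
                      = ∑ w ∈ J.filter (fun w => w.2 = true), (bif w.2 then τa else τb)
                        + ∑ w ∈ J.filter (fun w => ¬ (w.2 = true)),
                            (bif w.2 then τa else τb) :=
                    (Finset.sum_filter_add_sum_filter_not J _ _).symm
                  have ht : ∑ w ∈ J.filter (fun w => w.2 = true), (bif w.2 then τa else τb)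
                      = (J.filter (fun w => w.2 = true)).card * τa := by
                    rw [Finset.sum_eq_card_nsmul (b := τa) (fun w hw => by
                      rw [(mem_filter.mp hw).2]; rfl), nsmul_eq_mul]
                  have hf : ∑ w ∈ J.filter (fun w => ¬ (w.2 = true)),
                        (bif w.2 then τa else τb)
                      = (J.filter (fun w => ¬ (w.2 = true))).card * τb := by
                    rw [Finset.sum_eq_card_nsmul (b := τb) (fun w hw => by
                      have h3 := (mem_filter.mp hw).2
                      rw [Bool.not_eq_true] at h3
                      rw [h3]; rfl), nsmul_eq_mul]
                  have hct : 1 ≤ (J.filter (fun w => w.2 = true)).card :=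
                    card_pos.mpr ⟨w1, mem_filter.mpr ⟨hw1J, hw1⟩⟩
                  have hcf : 1 ≤ (J.filter (fun w => ¬ (w.2 = true))).card :=
                    card_pos.mpr ⟨w2, mem_filter.mpr ⟨hw2J, by rw [hw2]; simp⟩⟩
                  have hcsum : (J.filter (fun w => w.2 = true)).card
                      + (J.filter (fun w => ¬ (w.2 = true))).card ≤ d + 1 := by
                    rw [Finset.card_filter_add_card_filter_not]
                    exact hJd
                  have hctR : (1:ℝ) ≤ ((J.filter (fun w => w.2 = true)).card : ℝ) := by
                    exact_mod_cast hct
                  have hcfR : (1:ℝ) ≤ ((J.filter (fun w => ¬ (w.2 = true))).card : ℝ) := by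
                    exact_mod_cast hcf
                  have hcsumR : ((J.filter (fun w => w.2 = true)).card : ℝ)
                      + ((J.filter (fun w => ¬ (w.2 = true))).card : ℝ) ≤ (d : ℝ) + 1 := by
                    exact_mod_cast hcsum
                  rw [hsplit, ht, hf]
                  nlinarith [mul_le_mul_of_nonneg_left haK
                      (by linarith : (0:ℝ) ≤ ((J.filter (fun w => w.2 = true)).card : ℝ) - 1),
                    mul_le_mul_of_nonneg_left hbK
                      (by linarith :
                        (0:ℝ) ≤ ((J.filter (fun w => ¬ (w.2 = true))).card : ℝ) - 1)]
                · intro x hx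
                  refine hbad J x ?_
                  by_contra hall
                  push_neg at hall
                  have : x ∈ ⋂ w ∈ J, F w := Set.mem_iInter₂.mpr hall
                  rw [hc] at this
                  exact this
              · -- all labels true: one-sided with u
                push_neg at hex2
                obtain ⟨q, hq⟩ := one_sided hd P hn u hu τa h0a hdτa
                  ((J.filter (fun w => 0 ≤ (inner ℝ w.1 u : ℝ))).image (fun w => w.1))
                  (fun v hv => by
                    obtain ⟨w, hw, hwv⟩ := mem_image.mp hv
                    exact hwv ▸ (mem_filter.mp hw).2)
                refine ⟨q, Set.mem_iInter₂.mpr fun w hwJ => ?_⟩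
                rcases w with ⟨v, b⟩
                have hb : b = true := by
                  have h4 := hex2 (v, b) hwJ
                  simpa using h4
                subst hb
                by_cases hsgn : 0 ≤ (inner ℝ v u : ℝ)
                · rw [hFt v hsgn]
                  exact Set.mem_iInter₂.mp hq v
                    (mem_image.mpr ⟨(v, true), mem_filter.mpr ⟨hwJ, hsgn⟩, rfl⟩)
                · rw [hFt' v hsgn]; exact Set.mem_univ q
            · -- all labels false: one-sided with -u
              push_neg at hex1
              obtain ⟨q, hq⟩ := one_sided hd P hn (-u) (by rwa [norm_neg]) τb h0b hdτb
                ((J.filter (fun w => (inner ℝ w.1 u : ℝ) ≤ 0)).image (fun w => w.1))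
                (fun v hv => by
                  obtain ⟨w, hw, hwv⟩ := mem_image.mp hv
                  have h5 := (mem_filter.mp hw).2
                  rw [inner_neg_right]
                  subst hwv
                  linarith)
              refine ⟨q, Set.mem_iInter₂.mpr fun w hwJ => ?_⟩
              rcases w with ⟨v, b⟩
              have hb : b = false := by
                have h4 := hex1 (v, b) hwJ
                simpa using h4
              subst hb
              by_cases hsgn : (inner ℝ v u : ℝ) ≤ 0
              · rw [hFf v hsgn]
                exact Set.mem_iInter₂.mp hq v
                  (mem_image.mpr ⟨(v, false), mem_filter.mpr ⟨hwJ, hsgn⟩, rfl⟩)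
              · rw [hFf' v hsgn]; exact Set.mem_univ q
          obtain ⟨p, hp⟩ := hcl
          refine ⟨p, Set.mem_iInter₂.mpr ?_⟩
          intro o ho
          rcases hIJ o ho with h | ⟨w, hwJ, hw⟩
          · exact absurd (h ▸ ho) hnone
          · rw [hw]; exact Set.mem_iInter₂.mp hp w hwJ
    obtain ⟨p, hp⟩ := hmain
    have hpnone := Set.mem_iInter₂.mp hp none (mem_insert_self _ _)
    refine ⟨p, hpnone, Set.mem_iInter₂.mpr fun w hw => ?_⟩
    exact Set.mem_iInter₂.mp hp (some w) (mem_insert_of_mem (mem_image_of_mem some hw))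
  -- compactness: pass to the full intersection
  have hcomp : IsCompact (convexHull ℝ (↑P : Set (EuclideanSpace ℝ (Fin d)))) :=
    P.finite_toSet.isCompact_convexHull ℝ
  obtain ⟨p, _, hp⟩ := hcomp.inter_iInter_nonempty F hFclosed key
  have hpF : ∀ w, p ∈ F w := Set.mem_iInter.mp hp
  refine ⟨p, ?_, ?_⟩
  · intro v hsgn
    have h6 := hpF (v, true)
    rwa [hFt v hsgn] at h6
  · intro v hsgn
    have h6 := hpF (v, false)
    rwa [hFf v hsgn] at h6

end Aux

/-- (Theorem 1 of the paper, for point sets.) Let `P` be a set of `n`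
points in `ℝ^d` and let `α₁ ≤ … ≤ α_k` be non-negative reals such that
`(d-1)·α_k + α_i + α_j ≤ 1` whenever `i + j ≤ k + 1`. Then there are `k` points such that
every closed halfspace containing at least `j` of them contains at least `α_j·n` points
of `P`. (Indices `1, …, k` are represented by `Fin k` via `i ↦ i + 1`.) -/
theorem k_points_finite (d k n : ℕ) (hk : 0 < k)
    (P : Finset (EuclideanSpace ℝ (Fin d))) (hcard : P.card = n)
    (α : Fin k → ℝ)
    (hnonneg : ∀ i, 0 ≤ α i)
    (hmono : ∀ i j : Fin k, i ≤ j → α i ≤ α j)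
    (hcond : ∀ i j : Fin k, (i : ℕ) + 1 + ((j : ℕ) + 1) ≤ k + 1 →
      ((d : ℝ) - 1) * α ⟨k - 1, by omega⟩ + α i + α j ≤ 1) :
    ∃ p : Fin k → EuclideanSpace ℝ (Fin d),
      ∀ (j : Fin k) (v : EuclideanSpace ℝ (Fin d)) (c : ℝ), v ≠ 0 →
        (j : ℕ) + 1 ≤ (Finset.univ.filter (fun i => (inner ℝ v (p i) : ℝ) ≤ c)).card →
        α j * n ≤ (P.filter (fun x => (inner ℝ v x : ℝ) ≤ c)).card := by
  classical
  rcases Nat.eq_zero_or_pos d with hd0 | hd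
  · -- dimension 0: there is no nonzero `v`
    subst hd0
    refine ⟨fun _ => 0, fun j v c hv _ => absurd ?_ hv⟩
    exact WithLp.ofLp_injective 2 (funext fun i => i.elim0)
  rcases Nat.eq_zero_or_pos n with hn0 | hn
  · -- no points: trivial
    subst hn0
    refine ⟨fun _ => 0, fun j v c _ _ => ?_⟩
    simp
  -- main case
  have hnP : 1 ≤ P.card := by omega
  set K := α ⟨k - 1, by omega⟩ with hKdef
  have hK : ∀ i : Fin k, α i ≤ K := fun i =>
    hmono i ⟨k - 1, by omega⟩ (by rw [Fin.le_def]; simp; omega)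
  have hK0 : 0 ≤ K := hnonneg _
  have hdK : (d : ℝ) * K ≤ 1 := by
    have h := hcond ⟨k - 1, by omega⟩ ⟨0, hk⟩ (by simp; omega)
    have h0 := hnonneg ⟨0, hk⟩
    rw [← hKdef] at h
    nlinarith
  set u : EuclideanSpace ℝ (Fin d) := EuclideanSpace.single ⟨0, hd⟩ (1 : ℝ) with hudef
  have hu : ‖u‖ = 1 := by rw [hudef, EuclideanSpace.norm_single]; norm_num
  have hpair : ∀ i : Fin k,
      ((d : ℝ) - 1) * K + α i + α ⟨k - 1 - i.val, by omega⟩ ≤ 1 := fun i =>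
    hcond i ⟨k - 1 - i.val, by omega⟩ (by simp; omega)
  choose p hp1 hp2 using fun i : Fin k =>
    exists_deep_point_s10 hd P hnP u hu (α i) (α ⟨k - 1 - i.val, by omega⟩) K
      (hnonneg i) (hnonneg _) (hK i) (hK _) hdK (hpair i)
  refine ⟨p, ?_⟩
  intro j v c hv hcount
  have hnn : (0 : ℝ) ≤ (n : ℝ) := Nat.cast_nonneg n
  by_cases hsgn : 0 ≤ (inner ℝ v u : ℝ)
  · -- use the largest selected index
    have hex : ∃ i ∈ Finset.univ.filter (fun i : Fin k => (inner ℝ v (p i) : ℝ) ≤ c),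
        j.val ≤ i.val := by
      by_contra hno
      push_neg at hno
      have hle : (Finset.univ.filter (fun i : Fin k => (inner ℝ v (p i) : ℝ) ≤ c)).card
          ≤ (Finset.range j.val).card := by
        refine Finset.card_le_card_of_injOn (fun i => i.val)
          (fun i hi => Finset.mem_range.mpr (hno i hi)) ?_
        intro a _ b _ h
        exact Fin.val_injective h
      rw [Finset.card_range] at hle
      omega
    obtain ⟨i, hiF, hij⟩ := hex
    have hple : (inner ℝ v (p i) : ℝ) ≤ c := (mem_filter.mp hiF).2
    have hKmem := hp1 i v hsgn
    have h1 : ⌈α i * (P.card : ℝ)⌉₊ ≤ (P.filter fun y => (inner ℝ v y : ℝ) ≤ c).card := by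
      refine le_trans hKmem (card_le_card ?_)
      intro y hy
      exact mem_filter.mpr ⟨(mem_filter.mp hy).1, le_trans (mem_filter.mp hy).2 hple⟩
    have h2 : α j * (n : ℝ) ≤ α i * (n : ℝ) :=
      mul_le_mul_of_nonneg_right (hmono j i (by rw [Fin.le_def]; omega)) hnn
    calc α j * (n : ℝ) ≤ α i * (n : ℝ) := h2
      _ ≤ (⌈α i * (n : ℝ)⌉₊ : ℝ) := Nat.le_ceil _
      _ ≤ ((P.filter fun y => (inner ℝ v y : ℝ) ≤ c).card : ℝ) := by
          rw [← hcard] at *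
          exact_mod_cast h1
  · -- use the smallest selected index
    have hsgn' : (inner ℝ v u : ℝ) ≤ 0 := le_of_not_ge hsgn
    have hex : ∃ i ∈ Finset.univ.filter (fun i : Fin k => (inner ℝ v (p i) : ℝ) ≤ c),
        i.val ≤ k - 1 - j.val := by
      by_contra hno
      push_neg at hno
      have hle : (Finset.univ.filter (fun i : Fin k => (inner ℝ v (p i) : ℝ) ≤ c)).card
          ≤ (Finset.range j.val).card := by
        refine Finset.card_le_card_of_injOn (fun i => i.val - (k - j.val))
          (fun i hi => Finset.mem_range.mpr ?_) ?_
        · show i.val - (k - j.val) < j.val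
          have h3 := hno i hi
          have h4 := i.isLt
          have h5 := j.isLt
          omega
        · intro a ha b hb h
          have h3 := hno a ha
          have h4 := hno b hb
          have h5 := j.isLt
          apply Fin.val_injective
          simp only at h
          omega
      rw [Finset.card_range] at hle
      omega
    obtain ⟨i, hiF, hij⟩ := hex
    have hple : (inner ℝ v (p i) : ℝ) ≤ c := (mem_filter.mp hiF).2
    have hKmem := hp2 i v hsgn'
    have h1 : ⌈α ⟨k - 1 - i.val, by omega⟩ * (P.card : ℝ)⌉₊
        ≤ (P.filter fun y => (inner ℝ v y : ℝ) ≤ c).card := by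
      refine le_trans hKmem (card_le_card ?_)
      intro y hy
      exact mem_filter.mpr ⟨(mem_filter.mp hy).1, le_trans (mem_filter.mp hy).2 hple⟩
    have h2 : α j * (n : ℝ) ≤ α ⟨k - 1 - i.val, by omega⟩ * (n : ℝ) := by
      refine mul_le_mul_of_nonneg_right (hmono j _ ?_) hnn
      rw [Fin.le_def]
      simp only
      have h5 := j.isLt
      omega
    calc α j * (n : ℝ) ≤ α ⟨k - 1 - i.val, by omega⟩ * (n : ℝ) := h2
      _ ≤ (⌈α ⟨k - 1 - i.val, by omega⟩ * (n : ℝ)⌉₊ : ℝ) := Nat.le_ceil _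
      _ ≤ ((P.filter fun y => (inner ℝ v y : ℝ) ≤ c).card : ℝ) := by
          rw [← hcard] at *
          exact_mod_cast h1
end
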